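/- arXiv:2407.12343 — 9 statements merged into one kernel-verified Lean document; each statement's English description precedes it below -/
import Mathlib

section
/- If E ⊆ ℝⁿ is Lebesgue measurable, then for all m ∈ [n, +∞) the set of m-density points of E^(n) equals the set of m-density points of E: (E^(n))^(m) = E^(m). In particular (E^(n))^(n) = E^(n). -/
open MeasureTheory Metric Filter Set Topology ENNReal

noncomputable section

/-- The set of `m`-density points of `E ⊆ ℝⁿ`:
`x` with `𝓛ⁿ(B(x,r) \ E) / rᵐ → 0` as `r → 0⁺`. -/
def dPts (n : ℕ) (E : Set (EuclideanSpace ℝ (Fin n))) (m : ℝ) :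
    Set (EuclideanSpace ℝ (Fin n)) :=
  {x | Tendsto (fun r : ℝ => volume (ball x r \ E) / ENNReal.ofReal (r ^ m))
      (𝓝[>] 0) (𝓝 0)}

open Classical in
/-- The density-degree function of `E`. -/
def dDeg (n : ℕ) (E : Set (EuclideanSpace ℝ (Fin n))) (x : EuclideanSpace ℝ (Fin n)) :
    ℝ≥0∞ :=
  if x ∈ dPts n E n then
    sSup (ENNReal.ofReal '' {m : ℝ | (n : ℝ) ≤ m ∧ x ∈ dPts n E m})
  else 0

-- If E and F agree a.e., they have the same m-density points.
lemma dPts_congr_ae {n : ℕ} {E F : Set (EuclideanSpace ℝ (Fin n))}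
    (h1 : volume (E \ F) = 0) (h2 : volume (F \ E) = 0) (m : ℝ) :
    dPts n E m = dPts n F m := by
  have key : ∀ (x : EuclideanSpace ℝ (Fin n)) (r : ℝ),
      volume (ball x r \ E) = volume (ball x r \ F) := by
    have aux : ∀ (A B : Set (EuclideanSpace ℝ (Fin n))), volume (B \ A) = 0 →
        ∀ (x : EuclideanSpace ℝ (Fin n)) (r : ℝ),
        volume (ball x r \ A) ≤ volume (ball x r \ B) := by
      intro A B hBA x r
      calc volume (ball x r \ A) ≤ volume ((ball x r \ B) ∪ (B \ A)) := by
            apply measure_mono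
            intro y ⟨hyb, hyA⟩
            by_cases hyB : y ∈ B
            · exact Or.inr ⟨hyB, hyA⟩
            · exact Or.inl ⟨hyb, hyB⟩
        _ ≤ volume (ball x r \ B) + volume (B \ A) := measure_union_le _ _
        _ = volume (ball x r \ B) := by rw [hBA, add_zero]
    intro x r
    exact le_antisymm (aux E F h2 x r) (aux F E h1 x r)
  ext x
  simp only [dPts, mem_setOf_eq]
  constructor <;> intro h <;> [skip; skip] <;>
    · refine h.congr (fun r => ?_)
      rw [key]

-- a point where the closed-ball density ratio tends to 1 is an n-density point
lemma mem_dPts_of_ratio {n : ℕ} {E : Set (EuclideanSpace ℝ (Fin n))} (hE : MeasurableSet E)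
    {x : EuclideanSpace ℝ (Fin n)}
    (hx : Tendsto (fun r => volume (E ∩ closedBall x r) / volume (closedBall x r))
      (𝓝[>] 0) (𝓝 1)) :
    x ∈ dPts n E n := by
  set c := volume (ball (0 : EuclideanSpace ℝ (Fin n)) 1) with hc
  have hc0 : c ≠ 0 := (measure_ball_pos volume _ one_pos).ne'
  have hctop : c ≠ ∞ := measure_ball_lt_top.ne
  have h2 : Tendsto
      (fun r => (1 - volume (E ∩ closedBall x r) / volume (closedBall x r)) * c)
      (𝓝[>] 0) (𝓝 0) := by
    have hone : Tendsto (fun _ : ℝ => (1 : ℝ≥0∞)) (𝓝[>] (0:ℝ)) (𝓝 1) := tendsto_const_nhds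
    have hsub := ENNReal.Tendsto.sub hone hx (Or.inl one_ne_top)
    have := ENNReal.Tendsto.mul_const hsub (Or.inr hctop)
    simpa using this
  simp only [dPts, mem_setOf_eq]
  apply tendsto_of_tendsto_of_tendsto_of_le_of_le' tendsto_const_nhds h2
  · filter_upwards with r using zero_le
  · filter_upwards [self_mem_nhdsWithin] with r (hr : 0 < r)
    have hXdef : ENNReal.ofReal (r ^ (n : ℝ)) = ENNReal.ofReal (r ^ n) := by
      rw [Real.rpow_natCast]
    set X := ENNReal.ofReal (r ^ n) with hXd
    have hX0 : X ≠ 0 := (ENNReal.ofReal_pos.mpr (pow_pos hr n)).ne'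
    have hXtop : X ≠ ∞ := ENNReal.ofReal_ne_top
    have hvol : volume (closedBall x r) = X * c := by
      rw [Measure.addHaar_closedBall volume x hr.le, finrank_euclideanSpace_fin]
    have hXc0 : X * c ≠ 0 := by simp [hX0, hc0]
    have hXctop : X * c ≠ ∞ := ENNReal.mul_ne_top hXtop hctop
    rw [hXdef, ENNReal.div_le_iff hX0 hXtop]
    set b := volume (E ∩ closedBall x r) with hb
    have hbfin : b ≠ ∞ := by
      refine ne_top_of_le_ne_top hXctop ?_
      rw [← hvol]; exact measure_mono inter_subset_right
    have hsplit : volume (closedBall x r ∩ E) + volume (closedBall x r \ E)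
        = volume (closedBall x r) := measure_inter_add_diff _ hE
    have hle1 : volume (ball x r \ E) ≤ X * c - b := by
      refine le_trans (measure_mono (diff_subset_diff_left ball_subset_closedBall)) ?_
      refine le_of_eq (ENNReal.eq_sub_of_add_eq hbfin ?_)
      rw [hb, inter_comm E, add_comm, hsplit, hvol]
    refine hle1.trans ?_
    rw [hvol, mul_assoc, mul_comm c X, ENNReal.sub_mul (fun _ _ => hXctop), one_mul,
      ENNReal.div_mul_cancel hXc0 hXctop]

-- a point cannot be an n-density point of both E and Eᶜ
lemma not_dPts_both {n : ℕ} {E : Set (EuclideanSpace ℝ (Fin n))}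
    {x : EuclideanSpace ℝ (Fin n)} (h1 : x ∈ dPts n E n) (h2 : x ∈ dPts n Eᶜ n) : False := by
  set c := volume (ball (0 : EuclideanSpace ℝ (Fin n)) 1) with hc
  have hc0 : c ≠ 0 := (measure_ball_pos volume _ one_pos).ne'
  set k := ENNReal.ofReal ((2 : ℝ)⁻¹ ^ n) * c with hk
  have hk0 : k ≠ 0 := by
    simp [hk, hc0, ENNReal.ofReal_pos.mpr (pow_pos (by norm_num : (0:ℝ) < 2⁻¹) n)]
  have hsum : Tendsto (fun r : ℝ =>
      volume (ball x r \ E) / ENNReal.ofReal (r ^ (n : ℝ)) +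
      volume (ball x r \ Eᶜ) / ENNReal.ofReal (r ^ (n : ℝ))) (𝓝[>] 0) (𝓝 0) := by
    simpa using Tendsto.add h1 h2
  have hlow : ∀ᶠ r in 𝓝[>] (0 : ℝ), k ≤
      volume (ball x r \ E) / ENNReal.ofReal (r ^ (n : ℝ)) +
      volume (ball x r \ Eᶜ) / ENNReal.ofReal (r ^ (n : ℝ)) := by
    filter_upwards [self_mem_nhdsWithin] with r (hr : 0 < r)
    have hXdef : ENNReal.ofReal (r ^ (n : ℝ)) = ENNReal.ofReal (r ^ n) := by
      rw [Real.rpow_natCast]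
    rw [hXdef, ENNReal.div_add_div_same]
    set X := ENNReal.ofReal (r ^ n) with hXd
    have hX0 : X ≠ 0 := (ENNReal.ofReal_pos.mpr (pow_pos hr n)).ne'
    have hXtop : X ≠ ∞ := ENNReal.ofReal_ne_top
    rw [ENNReal.le_div_iff_mul_le (Or.inl hX0) (Or.inl hXtop)]
    have hsmall : volume (closedBall x (r / 2)) = k * X := by
      rw [Measure.addHaar_closedBall volume x (by positivity : (0:ℝ) ≤ r / 2),
        finrank_euclideanSpace_fin, hk, hXd]
      rw [div_eq_inv_mul, mul_pow, ENNReal.ofReal_mul (by positivity)]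
      ring
    calc k * X = volume (closedBall x (r / 2)) := hsmall.symm
      _ ≤ volume (ball x r) := measure_mono (closedBall_subset_ball (by linarith))
      _ ≤ volume ((ball x r \ E) ∪ (ball x r \ Eᶜ)) := by
          apply measure_mono
          intro y hy
          by_cases hyE : y ∈ E
          · exact Or.inr ⟨hy, by simp [hyE]⟩
          · exact Or.inl ⟨hy, hyE⟩
      _ ≤ volume (ball x r \ E) + volume (ball x r \ Eᶜ) := measure_union_le _ _
  exact hk0 (le_antisymm (ge_of_tendsto hsum hlow) zero_le ▸ rfl)

lemma null_diff1 {n : ℕ} {E : Set (EuclideanSpace ℝ (Fin n))} (hE : MeasurableSet E) :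
    volume (E \ dPts n E n) = 0 := by
  have h := Besicovitch.ae_tendsto_measure_inter_div_of_measurableSet volume hE
  refine measure_mono_null ?_ (ae_iff.mp h)
  rintro x ⟨hxE, hxD⟩
  simp only [mem_setOf_eq]
  intro hP
  refine hxD (mem_dPts_of_ratio hE ?_)
  simpa [indicator_of_mem hxE] using hP

lemma null_diff2 {n : ℕ} {E : Set (EuclideanSpace ℝ (Fin n))} (hE : MeasurableSet E) :
    volume (dPts n E n \ E) = 0 := by
  refine measure_mono_null ?_ (null_diff1 hE.compl)
  rintro x ⟨hxD, hxE⟩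
  exact ⟨hxE, fun hD' => not_dPts_both hxD hD'⟩

theorem density_points_of_density_points (n : ℕ) (E : Set (EuclideanSpace ℝ (Fin n)))
    (hE : MeasurableSet E) (m : ℝ) (hm : (n : ℝ) ≤ m) :
    dPts n (dPts n E n) m = dPts n E m :=
  (dPts_congr_ae (null_diff1 hE) (null_diff2 hE) m).symm
end
end

section
/- For every set E ⊆ ℝⁿ and every m ∈ [n, +∞), the set E^(m) of m-density points of E is Lebesgue measurable. -/
open MeasureTheory Metric Filter Set Topology ENNReal

noncomputable section

/-- The map `x ↦ ν (ball x s)` is measurable for an s-finite measure `ν`. -/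
lemma measurable_ball_measure {n : ℕ} (ν : Measure (EuclideanSpace ℝ (Fin n)))
    [SFinite ν] (s : ℝ) : Measurable fun x => ν (ball x s) := by
  have hset : MeasurableSet {p : (EuclideanSpace ℝ (Fin n)) × (EuclideanSpace ℝ (Fin n)) |
      dist p.2 p.1 < s} :=
    (isOpen_lt (continuous_dist.comp (continuous_snd.prodMk continuous_fst))
      continuous_const).measurableSet
  have hf : Measurable fun p : (EuclideanSpace ℝ (Fin n)) × (EuclideanSpace ℝ (Fin n)) =>
      ({p : (EuclideanSpace ℝ (Fin n)) × (EuclideanSpace ℝ (Fin n)) |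
        dist p.2 p.1 < s}.indicator (fun _ => (1 : ℝ≥0∞)) p) :=
    measurable_const.indicator hset
  have h := hf.lintegral_prod_right' (ν := ν)
  have heq : ∀ x, (∫⁻ y, ({p : (EuclideanSpace ℝ (Fin n)) × (EuclideanSpace ℝ (Fin n)) |
      dist p.2 p.1 < s}.indicator (fun _ => (1 : ℝ≥0∞)) (x, y)) ∂ν) = ν (ball x s) := by
    intro x
    rw [← lintegral_indicator_one measurableSet_ball]
    refine lintegral_congr fun y => ?_
    by_cases hxy : dist y x < s <;>
      simp [Set.indicator_apply, Metric.mem_ball, hxy]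
  simpa only [heq] using h

theorem density_points_measurableSet (n : ℕ) (E : Set (EuclideanSpace ℝ (Fin n)))
    (m : ℝ) (hm : (n : ℝ) ≤ m) :
    MeasurableSet (dPts n E m) := by
  classical
  set A : Set (EuclideanSpace ℝ (Fin n)) := toMeasurable volume Eᶜ with hA
  have hAmeas : MeasurableSet A := measurableSet_toMeasurable _ _
  -- outer measure of `ball x r \ E` equals measure of `ball x r ∩ A`
  have hkey : ∀ (x : EuclideanSpace ℝ (Fin n)) (r : ℝ),
      volume (ball x r \ E) = volume (ball x r ∩ A) := by
    intro x r
    rw [diff_eq, inter_comm, inter_comm _ A]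
    exact (Measure.measure_toMeasurable_inter_of_sFinite measurableSet_ball Eᶜ).symm
  -- the characterization of the tendsto condition by countable data
  have hchar : dPts n E m = ⋂ (k : ℕ), ⋃ (q : ℚ) (_ : 0 < q),
      ⋂ (s : ℚ) (_ : 0 < (s : ℝ)) (_ : (s : ℝ) < (q : ℝ)),
        {x | volume (ball x (s : ℝ) ∩ A) ≤ ((k : ℝ≥0∞) + 1)⁻¹ *
          ENNReal.ofReal ((s : ℝ) ^ m)} := by
    ext x
    simp only [dPts, mem_setOf_eq, mem_iInter, mem_iUnion, exists_prop]
    constructor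
    · intro hx k
      have hk : (0 : ℝ≥0∞) < ((k : ℝ≥0∞) + 1)⁻¹ :=
        ENNReal.inv_pos.mpr (by simp [ENNReal.add_eq_top])
      have h := (ENNReal.tendsto_nhds_zero.mp hx) _ hk
      rw [eventually_nhdsWithin_iff] at h
      rcases Metric.eventually_nhds_iff.mp h with ⟨δ, hδ, hδ'⟩
      obtain ⟨q, hq0, hqδ⟩ := exists_rat_btwn hδ
      refine ⟨q, by exact_mod_cast hq0, fun s hs hsq => ?_⟩
      have hsδ : dist (s : ℝ) (0 : ℝ) < δ := by
        rw [Real.dist_eq, sub_zero, abs_of_pos hs]; linarith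
      have h2 := hδ' hsδ (by simpa using hs)
      have hne0 : ENNReal.ofReal ((s : ℝ) ^ m) ≠ 0 :=
        (ENNReal.ofReal_pos.mpr (by positivity)).ne'
      rw [hkey, ENNReal.div_le_iff hne0 ofReal_ne_top] at h2
      exact h2
    · intro hx
      rw [ENNReal.tendsto_nhds_zero]
      intro ε hε
      obtain ⟨k, hk⟩ := ENNReal.exists_inv_nat_lt hε.ne'
      obtain ⟨q, hq, hq'⟩ := hx k
      have hq0 : (0 : ℝ) < (q : ℝ) := by exact_mod_cast hq
      rw [eventually_nhdsWithin_iff, Metric.eventually_nhds_iff]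
      refine ⟨q, hq0, fun {r} hrq hr0 => ?_⟩
      rw [mem_Ioi] at hr0
      rw [Real.dist_eq, sub_zero, abs_of_pos hr0] at hrq
      -- show the bound for real `r` by rational approximation from above
      have hbound : volume (ball x r ∩ A) ≤ ((k : ℝ≥0∞) + 1)⁻¹ *
          ENNReal.ofReal (r ^ m) := by
        have hlim : Tendsto (fun s : ℝ => ((k : ℝ≥0∞) + 1)⁻¹ *
            ENNReal.ofReal (s ^ m)) (𝓝[>] r) (𝓝 (((k : ℝ≥0∞) + 1)⁻¹ *
            ENNReal.ofReal (r ^ m))) := by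
          apply Tendsto.mono_left _ nhdsWithin_le_nhds
          exact ENNReal.Tendsto.const_mul
            (ENNReal.continuous_ofReal.continuousAt.tendsto.comp
              ((Real.continuousAt_rpow_const r m (Or.inl hr0.ne')).tendsto))
            (Or.inr (ENNReal.inv_ne_top.mpr (by simp)))
        have hfreq' : ∃ᶠ s in 𝓝[>] r, volume (ball x r ∩ A) ≤
            ((k : ℝ≥0∞) + 1)⁻¹ * ENNReal.ofReal (s ^ m) := by
          rw [frequently_iff]
          intro U hU
          rcases mem_nhdsGT_iff_exists_Ioo_subset.mp hU with ⟨u, hu, huU⟩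
          rw [mem_Ioi] at hu
          obtain ⟨s, hs1, hs2⟩ := exists_rat_btwn (lt_min hu hrq)
          rw [lt_min_iff] at hs2
          refine ⟨(s : ℝ), huU ⟨hs1, hs2.1⟩, ?_⟩
          have h1 := hq' s (hr0.trans hs1) hs2.2
          exact le_trans (measure_mono
            (inter_subset_inter_left _ (ball_subset_ball hs1.le))) h1
        by_contra hlt
        push_neg at hlt
        have hev := hlim.eventually_lt_const hlt
        obtain ⟨s, hs1, hs2⟩ := (hfreq'.and_eventually hev).exists
        exact absurd hs2 (not_lt.mpr hs1)
      have hne0 : ENNReal.ofReal (r ^ m) ≠ 0 :=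
        (ENNReal.ofReal_pos.mpr (by positivity)).ne'
      rw [hkey, ENNReal.div_le_iff hne0 ofReal_ne_top]
      refine hbound.trans ?_
      gcongr
      calc ((k : ℝ≥0∞) + 1)⁻¹ ≤ ((k : ℝ≥0∞))⁻¹ := by gcongr; exact le_self_add
        _ ≤ ε := hk.le
  rw [hchar]
  refine MeasurableSet.iInter fun k => MeasurableSet.iUnion fun q =>
    MeasurableSet.iUnion fun _ => MeasurableSet.iInter fun s =>
    MeasurableSet.iInter fun _ => MeasurableSet.iInter fun _ => ?_
  have heq : ∀ x : EuclideanSpace ℝ (Fin n), volume (ball x (s : ℝ) ∩ A) =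
      (volume.restrict A) (ball x (s : ℝ)) := fun x =>
    (Measure.restrict_apply measurableSet_ball).symm
  simp only [heq]
  exact measurableSet_le (measurable_ball_measure _ _) measurable_const
end
end

section
/- Let E ⊆ ℝⁿ be measurable, x ∈ ℝⁿ, m ∈ [n, +∞), and let g : ℝⁿ → ℝ be continuous with g(x) ≠ 0. If ∫_{Eᶜ} g(y) φ((y−x)/r) d𝓛ⁿ(y) = o(rᵐ) as r → 0⁺ for every continuous compactly supported φ : ℝⁿ → ℝ, then x is an m-density point of E. -/
open MeasureTheory Metric Filter Set Topology ENNReal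

noncomputable section

theorem density_point_of_integral_littleO (n : ℕ) (E : Set (EuclideanSpace ℝ (Fin n)))
    (hE : MeasurableSet E) (x : EuclideanSpace ℝ (Fin n)) (m : ℝ) (hm : (n : ℝ) ≤ m)
    (g : EuclideanSpace ℝ (Fin n) → ℝ) (hg : Continuous g) (hgx : g x ≠ 0)
    (h : ∀ φ : EuclideanSpace ℝ (Fin n) → ℝ, Continuous φ → HasCompactSupport φ →
      (fun r : ℝ => ∫ y in Eᶜ, g y * φ (r⁻¹ • (y - x))) =o[𝓝[>] 0] fun r => r ^ m) :
    x ∈ dPts n E m := by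
  show Tendsto (fun r : ℝ => volume (ball x r \ E) / ENNReal.ofReal (r ^ m))
      (𝓝[>] (0:ℝ)) (𝓝 0)
  classical
  set s : ℝ := if 0 < g x then 1 else -1 with hs
  set c : ℝ := |g x| / 2 with hc
  have hc0 : 0 < c := by positivity
  have hsg : s * g x = |g x| := by
    rcases lt_or_gt_of_ne hgx with h1 | h1
    · simp [hs, not_lt.2 h1.le, abs_of_neg h1]
    · simp [hs, h1, abs_of_pos h1]
  have hcont : Continuous fun y => s * g y := continuous_const.mul hg
  have hev : ∀ᶠ y in 𝓝 x, c < s * g y := by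
    have h2 := hcont.continuousAt (x := x)
    exact continuousAt_const.eventually_lt h2
      (by rw [hsg, hc]; have := abs_pos.2 hgx; linarith)
  obtain ⟨δ, hδ0, hδ⟩ := Metric.eventually_nhds_iff_ball.1 hev
  set b : ContDiffBump (0 : EuclideanSpace ℝ (Fin n)) := ⟨1/2, 1, by norm_num, by norm_num⟩
    with hbdef
  have hrIn : b.rIn = 1/2 := rfl
  have hrOut : b.rOut = 1 := rfl
  have hφc : Continuous fun y => s * b y := continuous_const.mul b.continuous
  have hφs : HasCompactSupport fun y : EuclideanSpace ℝ (Fin n) => s * b y :=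
    b.hasCompactSupport.mul_left
  have hφ := h _ hφc hφs
  set I : ℝ → ℝ := fun r => ∫ y in Eᶜ, g y * (s * b (r⁻¹ • (y - x))) with hI
  -- key inequality
  have key : ∀ r : ℝ, 0 < r → 2*r ≤ δ →
      c * (volume (ball x r \ E)).toReal ≤ I (2*r) := by
    intro r hr hrδ
    have h2r : (0:ℝ) < 2*r := by linarith
    set f : EuclideanSpace ℝ (Fin n) → ℝ := fun y => g y * (s * b ((2*r)⁻¹ • (y - x)))
      with hf
    have hnorm : ∀ y : EuclideanSpace ℝ (Fin n),
        ‖(2*r)⁻¹ • (y - x)‖ = (2*r)⁻¹ * ‖y - x‖ := by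
      intro y; rw [norm_smul, Real.norm_eq_abs, abs_of_pos (by positivity)]
    have hfnn : ∀ y, 0 ≤ f y := by
      intro y
      rcases lt_or_ge (dist y x) (2*r) with hy | hy
      · have hyδ : y ∈ ball x δ := by rw [mem_ball]; linarith
        have h1 := (hδ y hyδ).le
        have hb := b.nonneg (x := (2*r)⁻¹ • (y - x))
        calc (0:ℝ) ≤ (s * g y) * b ((2*r)⁻¹ • (y - x)) :=
              mul_nonneg (hc0.le.trans h1) hb
          _ = f y := by rw [hf]; ring
      · have hz : b ((2*r)⁻¹ • (y - x)) = 0 := by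
          apply b.zero_of_le_dist
          rw [dist_zero_right, hnorm, hrOut, inv_mul_eq_div, le_div_iff₀ h2r]
          rw [dist_eq_norm] at hy; linarith
        simp only [hf, hz, mul_zero, le_refl]
    have hfc : Continuous f := hg.mul (continuous_const.mul
      (b.continuous.comp (by fun_prop)))
    have hfs : HasCompactSupport f := by
      apply HasCompactSupport.intro (isCompact_closedBall x (2*r))
      intro y hy
      have hy' : 2*r < dist y x := by simpa [mem_closedBall, not_le] using hy
      have hz : b ((2*r)⁻¹ • (y - x)) = 0 := by
        apply b.zero_of_le_dist
        rw [dist_zero_right, hnorm, hrOut, inv_mul_eq_div, le_div_iff₀ h2r]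
        rw [dist_eq_norm] at hy'; linarith
      simp only [hf, hz, mul_zero]
    have hint : Integrable f volume := hfc.integrable_of_hasCompactSupport hfs
    have hS : MeasurableSet (Eᶜ ∩ ball x r) := hE.compl.inter measurableSet_ball
    have hSfin : volume (Eᶜ ∩ ball x r) ≠ ⊤ :=
      ((measure_mono inter_subset_right).trans_lt measure_ball_lt_top).ne
    have hlow : ∀ y ∈ Eᶜ ∩ ball x r, c ≤ f y := by
      intro y hy
      have hyr : dist y x < r := mem_ball.1 hy.2
      have hb1 : b ((2*r)⁻¹ • (y - x)) = 1 := by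
        apply b.one_of_mem_closedBall
        rw [mem_closedBall, dist_zero_right, hnorm, hrIn, inv_mul_eq_div, div_le_iff₀ h2r]
        rw [dist_eq_norm] at hyr; linarith
      have hyδ : y ∈ ball x δ := mem_ball.2 (by linarith)
      have h1 := (hδ y hyδ).le
      calc c ≤ s * g y := h1
        _ = f y := by rw [hf]; simp only [hb1]; ring
    calc c * (volume (ball x r \ E)).toReal
        = c * (volume (Eᶜ ∩ ball x r)).toReal := by rw [diff_eq, inter_comm]
      _ ≤ ∫ y in Eᶜ ∩ ball x r, f y :=
          by have := setIntegral_ge_of_const_le hS hSfin hlow hint.integrableOn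
             rwa [smul_eq_mul, mul_comm, Measure.real] at this
      _ ≤ ∫ y in Eᶜ, f y := setIntegral_mono_set hint.integrableOn
          (Eventually.of_forall hfnn) (HasSubset.Subset.eventuallyLE inter_subset_left)
  -- littleO manipulations
  have hmap : Tendsto (fun r : ℝ => 2*r) (𝓝[>] (0:ℝ)) (𝓝[>] (0:ℝ)) := by
    refine tendsto_nhdsWithin_iff.2 ⟨?_, ?_⟩
    · have h2 : Tendsto (fun r:ℝ => 2*r) (𝓝 0) (𝓝 (2*0)) :=
        (continuous_const.mul continuous_id).tendsto 0
      simpa using h2.mono_left nhdsWithin_le_nhds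
    · filter_upwards [self_mem_nhdsWithin] with r hr
      exact Set.mem_Ioi.2 (mul_pos two_pos hr)
  have hI2 : (fun r => I (2*r)) =o[𝓝[>] (0:ℝ)] fun r => (2*r)^m := by
    simpa [Function.comp_def] using hφ.comp_tendsto hmap
  have hbig : (fun r:ℝ => (2*r)^m) =O[𝓝[>] (0:ℝ)] fun r => r^m := by
    refine Asymptotics.IsBigO.congr' ((Asymptotics.isBigO_refl (fun r:ℝ => r^m) _).const_mul_left ((2:ℝ)^m)) ?_
      EventuallyEq.rfl
    filter_upwards [self_mem_nhdsWithin] with r hr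
    exact (Real.mul_rpow (by norm_num) (le_of_lt hr)).symm
  have hI3 : (fun r => I (2*r)) =o[𝓝[>] (0:ℝ)] fun r => r^m := hI2.trans_isBigO hbig
  have hdiv : Tendsto (fun r => I (2*r) / r^m) (𝓝[>] (0:ℝ)) (𝓝 0) :=
    hI3.tendsto_div_nhds_zero
  have habs : Tendsto (fun r => c⁻¹ * |I (2*r) / r^m|) (𝓝[>] (0:ℝ)) (𝓝 0) := by
    have h2 := hdiv.abs
    simpa using h2.const_mul c⁻¹
  have hsq : Tendsto (fun r => (volume (ball x r \ E)).toReal / r^m)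
      (𝓝[>] (0:ℝ)) (𝓝 0) := by
    apply squeeze_zero' ?_ ?_ habs
    · filter_upwards [self_mem_nhdsWithin] with r hr
      exact div_nonneg ENNReal.toReal_nonneg (Real.rpow_nonneg hr.le m)
    · filter_upwards [Ioo_mem_nhdsGT_of_mem (Set.left_mem_Ico.2 (by positivity : (0:ℝ) < δ/2))]
        with r hr
      obtain ⟨hr0, hr1⟩ := hr
      have hk := key r hr0 (by linarith)
      have hrm : 0 < r^m := Real.rpow_pos_of_pos hr0 m
      have h1 : (volume (ball x r \ E)).toReal ≤ c⁻¹ * |I (2*r)| := by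
        have h2 : c * (volume (ball x r \ E)).toReal ≤ |I (2*r)| :=
          hk.trans (le_abs_self _)
        calc (volume (ball x r \ E)).toReal
            = c⁻¹ * (c * (volume (ball x r \ E)).toReal) := by field_simp
          _ ≤ c⁻¹ * |I (2*r)| :=
              mul_le_mul_of_nonneg_left h2 (inv_nonneg.2 hc0.le)
      calc (volume (ball x r \ E)).toReal / r^m
          ≤ (c⁻¹ * |I (2*r)|) / r^m := by gcongr
        _ = c⁻¹ * |I (2*r) / r^m| := by rw [abs_div, abs_of_pos hrm]; ring
  have heq : ∀ᶠ r in 𝓝[>] (0:ℝ),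
      ENNReal.ofReal ((volume (ball x r \ E)).toReal / r^m)
        = volume (ball x r \ E) / ENNReal.ofReal (r^m) := by
    filter_upwards [self_mem_nhdsWithin] with r hr
    rw [ENNReal.ofReal_div_of_pos (Real.rpow_pos_of_pos hr m),
      ENNReal.ofReal_toReal ((measure_mono diff_subset).trans_lt measure_ball_lt_top).ne]
  exact Tendsto.congr' heq (by simpa using ENNReal.tendsto_ofReal hsq)
end
end

section
/- Let E ⊆ ℝⁿ be measurable, x ∈ ℝⁿ, and m ∈ [n, +∞). Then x is an m-density point of E if and only if for every continuous compactly supported φ : ℝⁿ → ℝ one has ∫_{(E−x)/r} φ d𝓛ⁿ = ∫_{ℝⁿ} φ d𝓛ⁿ + o(r^{m−n}) as r → 0⁺. -/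
open MeasureTheory Metric Filter Set Topology ENNReal

noncomputable section

namespace DensityAux

variable {n : ℕ} (x : EuclideanSpace ℝ (Fin n))

lemma meas_preimage (r : ℝ) (hr : r ≠ 0) (S : Set (EuclideanSpace ℝ (Fin n))) :
    volume ((fun z => x + r • z) ⁻¹' S) = ENNReal.ofReal (|(r ^ n)⁻¹|) * volume S := by
  have h : (fun z : EuclideanSpace ℝ (Fin n) => x + r • z) = (fun y => x + y) ∘ (r • ·) := rfl
  rw [h, Set.preimage_comp, Measure.addHaar_preimage_smul volume hr,
    finrank_euclideanSpace_fin, measure_preimage_add, abs_inv, abs_pow]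

lemma image_eq_preimage (r : ℝ) (hr : r ≠ 0) (S : Set (EuclideanSpace ℝ (Fin n))) :
    (fun y => r⁻¹ • (y - x)) '' S = (fun z => x + r • z) ⁻¹' S := by
  ext z
  constructor
  · rintro ⟨y, hy, rfl⟩
    simpa [smul_smul, mul_inv_cancel₀ hr] using hy
  · intro hz
    exact ⟨x + r • z, hz, by simp [smul_smul, inv_mul_cancel₀ hr]⟩

lemma preimage_closedBall (r : ℝ) (hr : 0 < r) (R : ℝ) :
    (fun z : EuclideanSpace ℝ (Fin n) => x + r • z) ⁻¹' closedBall x (r * R)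
      = closedBall 0 R := by
  ext z
  simp only [Set.mem_preimage, mem_closedBall, dist_eq_norm]
  rw [show x + r • z - x = r • z by abel, norm_smul, Real.norm_eq_abs, abs_of_pos hr,
    sub_zero]
  exact mul_le_mul_iff_right₀ hr

lemma preimage_ball (r : ℝ) (hr : 0 < r) :
    (fun z : EuclideanSpace ℝ (Fin n) => x + r • z) ⁻¹' ball x r = ball 0 1 := by
  ext z
  simp only [Set.mem_preimage, mem_ball, dist_eq_norm]
  rw [show x + r • z - x = r • z by abel, norm_smul, Real.norm_eq_abs, abs_of_pos hr,
    sub_zero]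
  constructor
  · intro h; nlinarith [abs_nonneg (‖z‖ : ℝ)]
  · intro h
    calc r * ‖z‖ < r * 1 := by exact (mul_lt_mul_iff_right₀ hr).2 h
    _ = r := mul_one r

variable (E : Set (EuclideanSpace ℝ (Fin n))) (hE : MeasurableSet E)

/-- Upper bound for the integral difference. -/
lemma key_upper (hE : MeasurableSet E) {φ : EuclideanSpace ℝ (Fin n) → ℝ}
    (hφc : Continuous φ) (hφs : HasCompactSupport φ) {C R : ℝ}
    (hC : ∀ y, ‖φ y‖ ≤ C) (hR : tsupport φ ⊆ closedBall 0 R) (hC0 : 0 ≤ C)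
    {r : ℝ} (hr : 0 < r) :
    ‖(∫ y in (fun y => r⁻¹ • (y - x)) '' E, φ y) - ∫ y, φ y‖
      ≤ C * ((r ^ n)⁻¹ * (volume (ball x ((R + 1) * r) \ E)).toReal) := by
  have hint : Integrable φ := hφc.integrable_of_hasCompactSupport hφs
  set T : EuclideanSpace ℝ (Fin n) → EuclideanSpace ℝ (Fin n) := fun z => x + r • z with hT
  have hTc : Continuous T := continuous_const.add (continuous_id.const_smul r)
  set A : Set (EuclideanSpace ℝ (Fin n)) := T ⁻¹' E with hA
  have hAm : MeasurableSet A := hTc.measurable hE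
  rw [image_eq_preimage x r hr.ne' E]
  have hsplit : (∫ y in A, φ y) + ∫ y in Aᶜ, φ y = ∫ y, φ y :=
    integral_add_compl hAm hint
  have h1 : (∫ y in A, φ y) - ∫ y, φ y = -∫ y in Aᶜ, φ y := by linarith
  rw [h1, norm_neg]
  set K := tsupport φ with hK
  have hKm : MeasurableSet K := (isClosed_tsupport φ).measurableSet
  have h2 : (∫ y in Aᶜ ∩ K, φ y) + ∫ y in Aᶜ \ K, φ y = ∫ y in Aᶜ, φ y :=
    integral_inter_add_diff hKm hint.integrableOn
  have h3 : ∫ y in Aᶜ \ K, φ y = 0 := by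
    apply setIntegral_eq_zero_of_forall_eq_zero
    intro y hy
    exact image_eq_zero_of_notMem_tsupport hy.2
  have h4 : ∫ y in Aᶜ, φ y = ∫ y in Aᶜ ∩ K, φ y := by linarith
  rw [h4]
  -- volume bound
  have hKfin : volume (Aᶜ ∩ K) < ⊤ :=
    lt_of_le_of_lt (measure_mono Set.inter_subset_right) hφs.measure_lt_top
  have hbound := norm_setIntegral_le_of_norm_le_const (μ := volume) hKfin
    (fun y _ => hC y)
  refine hbound.trans ?_
  have hsub : Aᶜ ∩ K ⊆ T ⁻¹' ((ball x ((R + 1) * r) \ E)) := by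
    intro z hz
    have hz1 : z ∈ closedBall 0 R := hR hz.2
    have hz2 : z ∈ T ⁻¹' closedBall x (r * R) := by
      rw [preimage_closedBall x r hr R]; exact hz1
    constructor
    · have : dist (T z) x ≤ r * R := hz2
      have : dist (T z) x < (R + 1) * r := by nlinarith
      exact this
    · exact hz.1
  have hmeas : volume (Aᶜ ∩ K) ≤ ENNReal.ofReal ((r ^ n)⁻¹)
      * volume (ball x ((R + 1) * r) \ E) := by
    refine (measure_mono hsub).trans_eq ?_
    rw [meas_preimage x r hr.ne', abs_of_pos (by positivity : (0:ℝ) < (r ^ n)⁻¹)]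
  have hVfin : volume (ball x ((R + 1) * r) \ E) < ⊤ :=
    lt_of_le_of_lt (measure_mono Set.diff_subset) measure_ball_lt_top
  have htr : (volume (Aᶜ ∩ K)).toReal
      ≤ (r ^ n)⁻¹ * (volume (ball x ((R + 1) * r) \ E)).toReal := by
    have := ENNReal.toReal_mono ?_ hmeas
    · rwa [ENNReal.toReal_mul, ENNReal.toReal_ofReal (by positivity)] at this
    · exact (ENNReal.mul_ne_top ENNReal.ofReal_ne_top hVfin.ne)
  exact mul_le_mul_of_nonneg_left htr hC0

/-- Lower bound for the integral difference, for a function which is `1` on the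
unit closed ball and nonnegative. -/
lemma key_lower (hE : MeasurableSet E) {φ : EuclideanSpace ℝ (Fin n) → ℝ}
    (hφc : Continuous φ) (hφs : HasCompactSupport φ)
    (hpos : ∀ y, 0 ≤ φ y)
    (hone : ∀ y ∈ closedBall (0 : EuclideanSpace ℝ (Fin n)) 1, φ y = 1)
    {r : ℝ} (hr : 0 < r) :
    (r ^ n)⁻¹ * (volume (ball x r \ E)).toReal
      ≤ ‖(∫ y in (fun y => r⁻¹ • (y - x)) '' E, φ y) - ∫ y, φ y‖ := by
  have hint : Integrable φ := hφc.integrable_of_hasCompactSupport hφs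
  set T : EuclideanSpace ℝ (Fin n) → EuclideanSpace ℝ (Fin n) := fun z => x + r • z with hT
  have hTc : Continuous T := continuous_const.add (continuous_id.const_smul r)
  set A : Set (EuclideanSpace ℝ (Fin n)) := T ⁻¹' E with hA
  have hAm : MeasurableSet A := hTc.measurable hE
  rw [image_eq_preimage x r hr.ne' E]
  have hsplit : (∫ y in A, φ y) + ∫ y in Aᶜ, φ y = ∫ y, φ y :=
    integral_add_compl hAm hint
  have h1 : (∫ y in A, φ y) - ∫ y, φ y = -∫ y in Aᶜ, φ y := by linarith
  rw [h1, norm_neg]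
  set S : Set (EuclideanSpace ℝ (Fin n)) := Aᶜ ∩ closedBall 0 1 with hS
  have hSm : MeasurableSet S := hAm.compl.inter measurableSet_closedBall
  have hSfin : volume S < ⊤ :=
    lt_of_le_of_lt (measure_mono Set.inter_subset_right) (measure_closedBall_lt_top)
  have hsub : T ⁻¹' (ball x r \ E) ⊆ S := by
    intro z hz
    refine ⟨hz.2, ?_⟩
    have : z ∈ T ⁻¹' ball x r := hz.1
    rw [preimage_ball x r hr] at this
    exact ball_subset_closedBall this
  have hmeas : ENNReal.ofReal ((r ^ n)⁻¹) * volume (ball x r \ E) ≤ volume S := by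
    refine le_trans (le_of_eq ?_) (measure_mono hsub)
    rw [meas_preimage x r hr.ne',
      abs_of_pos (by positivity : (0:ℝ) < (r ^ n)⁻¹)]
  have htr : (r ^ n)⁻¹ * (volume (ball x r \ E)).toReal ≤ (volume S).toReal := by
    have h := ENNReal.toReal_mono hSfin.ne hmeas
    rwa [ENNReal.toReal_mul, ENNReal.toReal_ofReal (by positivity)] at h
  have hSint : ∫ y in S, φ y = (volume S).toReal := by
    rw [setIntegral_congr_fun hSm (fun y hy => hone y hy.2)]
    simp [setIntegral_const]
    rfl
  have hmono : ∫ y in S, φ y ≤ ∫ y in Aᶜ, φ y := by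
    apply setIntegral_mono_set hint.integrableOn
    · exact Eventually.of_forall hpos
    · exact HasSubset.Subset.eventuallyLE Set.inter_subset_left
  calc (r ^ n)⁻¹ * (volume (ball x r \ E)).toReal ≤ (volume S).toReal := htr
    _ = ∫ y in S, φ y := hSint.symm
    _ ≤ ∫ y in Aᶜ, φ y := hmono
    _ ≤ ‖∫ y in Aᶜ, φ y‖ := le_abs_self _

lemma mul_map_nhdsGT (c : ℝ) (hc : 0 < c) :
    Tendsto (fun r : ℝ => c * r) (𝓝[>] 0) (𝓝[>] 0) := by
  apply tendsto_nhdsWithin_of_tendsto_nhds_of_eventually_within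
  · have : Tendsto (fun r : ℝ => c * r) (𝓝 0) (𝓝 (c * 0)) :=
      (continuous_mul_left c).tendsto 0
    simpa using this.mono_left nhdsWithin_le_nhds
  · filter_upwards [self_mem_nhdsWithin] with r hr
    exact mul_pos hc hr

end DensityAux

open DensityAux in
theorem density_point_iff_rescaled_integral (n : ℕ) (E : Set (EuclideanSpace ℝ (Fin n)))
    (hE : MeasurableSet E) (x : EuclideanSpace ℝ (Fin n)) (m : ℝ) (hm : (n : ℝ) ≤ m) :
    x ∈ dPts n E m ↔
      ∀ φ : EuclideanSpace ℝ (Fin n) → ℝ, Continuous φ → HasCompactSupport φ →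
        (fun r : ℝ => (∫ y in (fun y => r⁻¹ • (y - x)) '' E, φ y) - ∫ y, φ y) =o[𝓝[>] 0]
          fun r => r ^ (m - n) := by
  have hV : ∀ s : ℝ, volume (ball x s \ E) ≠ ⊤ :=
    fun s => (lt_of_le_of_lt (measure_mono Set.diff_subset) measure_ball_lt_top).ne
  set W : ℝ → ℝ := fun s => (volume (ball x s \ E)).toReal / s ^ m with hWdef
  constructor
  · intro hx φ hφc hφs
    obtain ⟨C, hC⟩ := hφs.exists_bound_of_continuous hφc
    have hC0 : 0 ≤ C := le_trans (norm_nonneg _) (hC x)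
    obtain ⟨R, hR0, hR⟩ := hφs.isBounded.subset_closedBall_lt 0 0
    have hR1 : (0:ℝ) < R + 1 := by linarith
    have hW : Tendsto W (𝓝[>] 0) (𝓝 0) := by
      have h0 := (ENNReal.tendsto_toReal (by simp : (0:ℝ≥0∞) ≠ ⊤)).comp hx
      simp only [ENNReal.toReal_zero] at h0
      apply h0.congr'
      filter_upwards [self_mem_nhdsWithin] with s hs
      simp only [Function.comp_apply, hWdef]
      rw [ENNReal.toReal_div, ENNReal.toReal_ofReal (Real.rpow_nonneg hs.le m)]
    have hcomp : Tendsto (fun r => W ((R + 1) * r)) (𝓝[>] 0) (𝓝 0) :=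
      hW.comp (mul_map_nhdsGT (R + 1) hR1)
    rw [Asymptotics.isLittleO_iff_tendsto'
      (by filter_upwards [self_mem_nhdsWithin] with r hr hr0
          exact absurd hr0 (Real.rpow_pos_of_pos hr _).ne')]
    have hlim : Tendsto (fun r => C * (R + 1) ^ m * W ((R + 1) * r)) (𝓝[>] 0) (𝓝 0) := by
      simpa using hcomp.const_mul (C * (R + 1) ^ m)
    apply squeeze_zero_norm' _ hlim
    filter_upwards [self_mem_nhdsWithin] with r hr
    have hr' : (0:ℝ) < r := hr
    have hk := key_upper x E hE hφc hφs hC hR hC0 hr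
    have hrm : (0:ℝ) < r ^ (m - n) := Real.rpow_pos_of_pos hr' _
    rw [norm_div, Real.norm_eq_abs (r ^ (m - n)), abs_of_pos hrm]
    rw [div_le_iff₀ hrm]
    refine hk.trans (le_of_eq ?_)
    have hsplit : ((R + 1) * r) ^ m = (R + 1) ^ m * r ^ m :=
      Real.mul_rpow hR1.le hr'.le
    have hrn : r ^ (m - n) * (r:ℝ) ^ (n:ℕ) = r ^ m := by
      rw [← Real.rpow_natCast r n, ← Real.rpow_add hr']
      norm_num
    have hrm0 : (0:ℝ) < r ^ m := Real.rpow_pos_of_pos hr' m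
    have hrn0 : (0:ℝ) < (r:ℝ) ^ (n:ℕ) := by positivity
    simp only [hWdef, hsplit]
    field_simp
    linear_combination (-(C * (volume (ball x ((R + 1) * r) \ E)).toReal)) * hrn
  · intro h
    set f : ContDiffBump (0 : EuclideanSpace ℝ (Fin n)) := ⟨1, 2, one_pos, one_lt_two⟩
      with hf
    have ho := h f f.continuous f.hasCompactSupport
    have hT := (Asymptotics.isLittleO_iff_tendsto'
      (by filter_upwards [self_mem_nhdsWithin] with r hr hr0
          exact absurd hr0 (Real.rpow_pos_of_pos hr _).ne')).1 ho
    have hW : Tendsto W (𝓝[>] 0) (𝓝 0) := by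
      apply squeeze_zero' _ _ (by simpa using hT.norm)
      · filter_upwards [self_mem_nhdsWithin] with r hr
        have hrm0 : (0:ℝ) < r ^ m := Real.rpow_pos_of_pos hr m
        positivity
      · filter_upwards [self_mem_nhdsWithin] with r hr
        have hr' : (0:ℝ) < r := hr
        have hk := key_lower x E hE f.continuous f.hasCompactSupport
          (fun y => f.nonneg) (fun y hy => f.one_of_mem_closedBall hy) hr'
        have hrm : (0:ℝ) < r ^ (m - n) := Real.rpow_pos_of_pos hr' _
        rw [abs_of_pos hrm, le_div_iff₀ hrm]
        have hrn : r ^ (m - n) * (r:ℝ) ^ (n:ℕ) = r ^ m := by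
          rw [← Real.rpow_natCast r n, ← Real.rpow_add hr']
          norm_num
        have hrm0 : (0:ℝ) < r ^ m := Real.rpow_pos_of_pos hr' m
        have hrn0 : (0:ℝ) < (r:ℝ) ^ (n:ℕ) := by positivity
        calc W r * r ^ (m - n)
            = (r ^ n)⁻¹ * (volume (ball x r \ E)).toReal := by
              simp only [hWdef]
              field_simp
              linear_combination (volume (ball x r \ E)).toReal * hrn
          _ ≤ ‖(∫ y in (fun y => r⁻¹ • (y - x)) '' E, (f : EuclideanSpace ℝ (Fin n) → ℝ) y)
                - ∫ y, (f : EuclideanSpace ℝ (Fin n) → ℝ) y‖ := hk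
          _ = |(∫ y in (fun y => r⁻¹ • (y - x)) '' E, (f : EuclideanSpace ℝ (Fin n) → ℝ) y)
                - ∫ y, (f : EuclideanSpace ℝ (Fin n) → ℝ) y| := Real.norm_eq_abs _
    have := ENNReal.tendsto_ofReal hW
    simp only [ENNReal.ofReal_zero] at this
    apply this.congr'
    filter_upwards [self_mem_nhdsWithin] with r hr
    have hrm0 : (0:ℝ) < r ^ m := Real.rpow_pos_of_pos hr m
    rw [hWdef]
    simp only []
    rw [ENNReal.ofReal_div_of_pos hrm0, ENNReal.ofReal_toReal (hV r)]
end
end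

section
/- Let E ⊆ ℝⁿ be measurable, m ∈ [n, +∞), x an m-density point of E, and Γ : ℝⁿ → ℝ measurable and continuous at x. Suppose there exists a continuous compactly supported ψ with ∫ψ d𝓛ⁿ ≠ 0, measurable functions g₁,…,g_k bounded in a neighborhood of x, and continuous compactly supported φ₁,…,φ_k, such that for all small r > 0: |∫_{ℝⁿ} Γ(y) ψ((y−x)/r) d𝓛ⁿ(y)| ≤ r^{n−m} Σ_{i=1}^k |∫_{Eᶜ} g_i(y) φ_i((y−x)/r) d𝓛ⁿ(y)|. Then Γ(x) = 0. -/
open MeasureTheory Metric Filter Set Topology ENNReal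

noncomputable section

theorem eq_zero_of_integral_bound (n : ℕ) (E : Set (EuclideanSpace ℝ (Fin n)))
    (hE : MeasurableSet E) (x : EuclideanSpace ℝ (Fin n)) (m : ℝ) (hm : (n : ℝ) ≤ m)
    (hx : x ∈ dPts n E m)
    (Γ : EuclideanSpace ℝ (Fin n) → ℝ) (hΓ : Measurable Γ) (hΓx : ContinuousAt Γ x)
    (ψ : EuclideanSpace ℝ (Fin n) → ℝ) (hψ : Continuous ψ) (hψc : HasCompactSupport ψ)
    (hψi : ∫ y, ψ y ≠ 0)
    (k : ℕ) (g : Fin k → EuclideanSpace ℝ (Fin n) → ℝ)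
    (hg : ∀ i, Measurable (g i)) (hgb : ∀ i, ∃ C : ℝ, ∀ᶠ y in 𝓝 x, |g i y| ≤ C)
    (φ : Fin k → EuclideanSpace ℝ (Fin n) → ℝ)
    (hφ : ∀ i, Continuous (φ i)) (hφc : ∀ i, HasCompactSupport (φ i))
    (hbound : ∀ᶠ r in 𝓝[>] (0 : ℝ),
      |∫ y, Γ y * ψ (r⁻¹ • (y - x))| ≤
        r ^ ((n : ℝ) - m) * ∑ i, |∫ y in Eᶜ, g i y * φ i (r⁻¹ • (y - x))|) :
    Γ x = 0 := by
  classical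
  -- bound for Γ near x
  set B : ℝ := |Γ x| + 1 with hB
  have hB0 : (0:ℝ) ≤ B := by positivity
  obtain ⟨δΓ, hδΓ, hΓb⟩ : ∃ ε > (0:ℝ), ∀ ⦃y⦄, dist y x < ε → |Γ y| ≤ B := by
    have h1 : Tendsto (fun y => |Γ y|) (𝓝 x) (𝓝 (|Γ x|)) :=
      (continuous_abs.tendsto _).comp hΓx
    have h2 : ∀ᶠ y in 𝓝 x, |Γ y| ≤ B :=
      (h1.eventually_lt_const (lt_add_one _)).mono fun y hy => hy.le
    exact Metric.eventually_nhds_iff.mp h2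
  -- support radius of ψ
  obtain ⟨Rψ', hRψ'⟩ := hψc.isBounded.subset_closedBall 0
  set Rψ : ℝ := max Rψ' 0 with hRψdef
  have hRψ0 : (0:ℝ) ≤ Rψ := le_max_right _ _
  have hψsupp : tsupport ψ ⊆ closedBall 0 Rψ :=
    hRψ'.trans (closedBall_subset_closedBall (le_max_left _ _))
  -- data for g i
  have hgb' : ∀ i, ∃ C, 0 ≤ C ∧ ∃ ε > (0:ℝ), ∀ ⦃y⦄, dist y x < ε → |g i y| ≤ C := by
    intro i
    obtain ⟨C, hC⟩ := hgb i
    exact ⟨max C 0, le_max_right _ _,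
      Metric.eventually_nhds_iff.mp (hC.mono fun y hy => hy.trans (le_max_left _ _))⟩
  choose C hC0 δ hδ hCb using hgb'
  -- data for φ i
  have hφb : ∀ i, ∃ M, 0 ≤ M ∧ ∀ y, |φ i y| ≤ M := by
    intro i
    obtain ⟨M, hM⟩ := (hφ i).bounded_above_of_compact_support (hφc i)
    exact ⟨max M 0, le_max_right _ _, fun y => (hM y).trans (le_max_left _ _)⟩
  choose M hM0 hMb using hφb
  have hφR : ∀ i, ∃ R, 0 ≤ R ∧ tsupport (φ i) ⊆ closedBall 0 R := by
    intro i
    obtain ⟨R, hR⟩ := (hφc i).isBounded.subset_closedBall 0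
    exact ⟨max R 0, le_max_right _ _,
      hR.trans (closedBall_subset_closedBall (le_max_left _ _))⟩
  choose R hR0 hRb using hφR
  set ρ : Fin k → ℝ := fun i => R i + 1 with hρdef
  have hρ0 : ∀ i, 0 < ρ i := fun i => by have := hR0 i; simp only [hρdef]; linarith
  set G : ℝ → ℝ := fun r => ∫ z, Γ (x + r • z) * ψ z with hGdef
  -- Claim A : G r → Γ x * ∫ ψ
  have hA : Tendsto G (𝓝[>] (0:ℝ)) (𝓝 (Γ x * ∫ z, ψ z)) := by
    have hmain : Tendsto G (𝓝[>] (0:ℝ)) (𝓝 (∫ z, Γ x * ψ z)) := by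
      apply tendsto_integral_filter_of_dominated_convergence (fun z => B * |ψ z|)
      · filter_upwards [self_mem_nhdsWithin] with r _
        exact ((hΓ.comp ((measurable_id.const_smul r).const_add x)).mul
          hψ.measurable).aestronglyMeasurable
      · have hev : ∀ᶠ r : ℝ in 𝓝[>] (0:ℝ), r * (Rψ + 1) < δΓ := by
          have h1 : Tendsto (fun r : ℝ => r * (Rψ + 1)) (𝓝[>] (0:ℝ)) (𝓝 0) := by
            simpa using ((continuous_id.fun_mul continuous_const).tendsto 0).mono_left
              (nhdsWithin_le_nhds (s := Ioi (0:ℝ)))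
          exact h1.eventually_lt_const hδΓ
        filter_upwards [hev, self_mem_nhdsWithin] with r hr hr0
        refine Eventually.of_forall fun z => ?_
        rw [Real.norm_eq_abs, abs_mul]
        by_cases hz : z ∈ tsupport ψ
        · have hz' : ‖z‖ ≤ Rψ := by
            simpa [mem_closedBall, dist_zero_right] using hψsupp hz
          have hdist : dist (x + r • z) x < δΓ := by
            rw [dist_eq_norm, add_sub_cancel_left, norm_smul, Real.norm_eq_abs,
              abs_of_pos hr0]
            have hr0' : (0:ℝ) < r := hr0
            nlinarith
          exact mul_le_mul_of_nonneg_right (hΓb hdist) (abs_nonneg _)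
        · simp [image_eq_zero_of_notMem_tsupport hz]
      · exact (hψ.norm.integrable_of_hasCompactSupport hψc.norm).const_mul B
      · refine Eventually.of_forall fun z => ?_
        have h1 : Tendsto (fun r : ℝ => x + r • z) (𝓝[>] (0:ℝ)) (𝓝 x) := by
          have h2 : Tendsto (fun r : ℝ => x + r • z) (𝓝 (0:ℝ)) (𝓝 (x + (0:ℝ) • z)) :=
            ((continuous_const.add (continuous_id.smul continuous_const)).tendsto 0)
          simpa using h2.mono_left (nhdsWithin_le_nhds (s := Ioi (0:ℝ)))
        exact (hΓx.tendsto.comp h1).mul tendsto_const_nhds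
    simpa [integral_const_mul] using hmain
  -- Claim B : change of variables
  have hFB : ∀ r : ℝ, 0 < r →
      (∫ y, Γ y * ψ (r⁻¹ • (y - x))) = r ^ n * G r := by
    intro r hr
    have h1 : (∫ y, Γ y * ψ (r⁻¹ • (y - x))) = ∫ z, Γ (x + z) * ψ (r⁻¹ • z) := by
      rw [← integral_add_left_eq_self (μ := volume)
        (fun y => Γ y * ψ (r⁻¹ • (y - x))) x]
      simp
    have h2 := Measure.integral_comp_inv_smul_of_nonneg (volume)
      (fun z => Γ (x + r • z) * ψ z) hr.le
    have h3 : ∀ z : EuclideanSpace ℝ (Fin n),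
        Γ (x + z) * ψ (r⁻¹ • z) = Γ (x + r • (r⁻¹ • z)) * ψ (r⁻¹ • z) := by
      intro z; rw [smul_inv_smul₀ hr.ne']
    rw [h1]
    simp_rw [h3]
    rw [h2, finrank_euclideanSpace_fin, smul_eq_mul]
  -- integral bound over Eᶜ
  have hint : ∀ (i : Fin k) (r : ℝ), 0 < r → r * ρ i < δ i →
      |∫ y in Eᶜ, g i y * φ i (r⁻¹ • (y - x))| ≤
        C i * M i * (volume (ball x (r * ρ i) \ E)).toReal := by
    intro i r hr hrδ
    set f : EuclideanSpace ℝ (Fin n) → ℝ := fun y => g i y * φ i (r⁻¹ • (y - x)) with hfdef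
    have hvanish : ∀ y ∉ closedBall x (r * R i), f y = 0 := by
      intro y hy
      have h1 : r * R i < ‖y - x‖ := by
        rw [mem_closedBall, dist_eq_norm, not_le] at hy
        exact hy
      have h2 : r⁻¹ • (y - x) ∉ tsupport (φ i) := by
        intro hmem
        have h3 := hRb i hmem
        rw [mem_closedBall, dist_zero_right, norm_smul, Real.norm_eq_abs,
          abs_of_pos (inv_pos.2 hr)] at h3
        have h4 : ‖y - x‖ ≤ r * R i := by
          have := mul_le_mul_of_nonneg_left h3 hr.le
          rwa [← mul_assoc, mul_inv_cancel₀ hr.ne', one_mul] at this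
        linarith
      simp [hfdef, image_eq_zero_of_notMem_tsupport h2]
    have heq : (∫ y in Eᶜ, f y) =
        ∫ y in closedBall x (r * R i), f y ∂(volume.restrict Eᶜ) :=
      (setIntegral_eq_integral_of_forall_compl_eq_zero
        (μ := volume.restrict Eᶜ) fun y hy => hvanish y hy).symm
    have hfin : (volume.restrict Eᶜ) (closedBall x (r * R i)) < ∞ := by
      rw [Measure.restrict_apply measurableSet_closedBall]
      exact lt_of_le_of_lt (measure_mono inter_subset_left) measure_closedBall_lt_top
    have hbnd : ∀ y ∈ closedBall x (r * R i), ‖f y‖ ≤ C i * M i := by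
      intro y hy
      rw [mem_closedBall] at hy
      have hyδ : dist y x < δ i := by
        have h5 : r * R i < r * ρ i := by
          rw [show ρ i = R i + 1 from rfl]
          nlinarith
        linarith
      rw [Real.norm_eq_abs, abs_mul]
      exact mul_le_mul (hCb i hyδ) (hMb i _) (abs_nonneg _) (hC0 i)
    have hnorm := norm_setIntegral_le_of_norm_le_const
      (μ := volume.restrict Eᶜ) (s := closedBall x (r * R i)) hfin
      hbnd
    rw [← heq, Real.norm_eq_abs] at hnorm
    refine hnorm.trans ?_
    refine mul_le_mul_of_nonneg_left ?_ (mul_nonneg (hC0 i) (hM0 i))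
    · have hsub : closedBall x (r * R i) ∩ Eᶜ ⊆ ball x (r * ρ i) \ E := by
        intro y hy
        rcases hy with ⟨hy1, hy2⟩
        refine ⟨?_, hy2⟩
        rw [mem_ball]
        rw [mem_closedBall] at hy1
        have : r * R i < r * ρ i := by
          rw [show ρ i = R i + 1 from rfl]
          nlinarith
        linarith
      rw [measureReal_def, Measure.restrict_apply measurableSet_closedBall]
      exact ENNReal.toReal_mono ((lt_of_le_of_lt (measure_mono diff_subset)
        measure_ball_lt_top).ne) (measure_mono hsub)
  -- scaled density convergence
  have hdens : ∀ i, Tendsto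
      (fun r : ℝ => (volume (ball x (r * ρ i) \ E)).toReal / r ^ m)
      (𝓝[>] (0:ℝ)) (𝓝 0) := by
    intro i
    have hmap : Tendsto (fun r : ℝ => r * ρ i) (𝓝[>] (0:ℝ)) (𝓝[>] (0:ℝ)) := by
      rw [tendsto_nhdsWithin_iff]
      constructor
      · simpa using ((continuous_id.fun_mul continuous_const).tendsto 0).mono_left
          (nhdsWithin_le_nhds (s := Ioi (0:ℝ)))
      · filter_upwards [self_mem_nhdsWithin] with r hr
        exact mul_pos hr (hρ0 i)
    have h1 : Tendsto (fun r : ℝ =>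
        volume (ball x (r * ρ i) \ E) / ENNReal.ofReal ((r * ρ i) ^ m))
        (𝓝[>] (0:ℝ)) (𝓝 0) := hx.comp hmap
    have h3 : Tendsto (fun r : ℝ =>
        (volume (ball x (r * ρ i) \ E)).toReal / (r * ρ i) ^ m)
        (𝓝[>] (0:ℝ)) (𝓝 0) := by
      have h2 := (ENNReal.tendsto_toReal (show (0:ℝ≥0∞) ≠ ⊤ by simp)).comp h1
      rw [ENNReal.toReal_zero] at h2
      refine h2.congr' ?_
      filter_upwards [self_mem_nhdsWithin] with r hr
      simp only [Function.comp_apply, ENNReal.toReal_div,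
        ENNReal.toReal_ofReal (Real.rpow_nonneg (mul_pos hr (hρ0 i)).le m)]
    have h4 := h3.mul_const ((ρ i) ^ m)
    rw [zero_mul] at h4
    refine h4.congr' ?_
    filter_upwards [self_mem_nhdsWithin] with r hr
    rw [Real.mul_rpow hr.le (hρ0 i).le, div_mul_eq_mul_div,
      mul_div_mul_right _ _ (Real.rpow_pos_of_pos (hρ0 i) m).ne']
  -- sum tendsto 0
  have hsum : Tendsto (fun r : ℝ => ∑ i, C i * M i *
      ((volume (ball x (r * ρ i) \ E)).toReal / r ^ m)) (𝓝[>] (0:ℝ)) (𝓝 0) := by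
    have h := tendsto_finset_sum Finset.univ
      (fun (i : Fin k) _ => ((hdens i).const_mul (C i * M i)))
    simpa using h
  -- squeeze
  have hGle : ∀ᶠ r in 𝓝[>] (0:ℝ), ‖G r‖ ≤ ∑ i, C i * M i *
      ((volume (ball x (r * ρ i) \ E)).toReal / r ^ m) := by
    have hev : ∀ᶠ r in 𝓝[>] (0:ℝ), ∀ i, r * ρ i < δ i := by
      rw [eventually_all]
      intro i
      have h1 : Tendsto (fun r : ℝ => r * ρ i) (𝓝[>] (0:ℝ)) (𝓝 0) := by
        simpa using ((continuous_id.fun_mul continuous_const).tendsto 0).mono_left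
          (nhdsWithin_le_nhds (s := Ioi (0:ℝ)))
      exact h1.eventually_lt_const (hδ i)
    filter_upwards [hbound, hev, self_mem_nhdsWithin] with r hb hrδ hr0
    have hr0' : (0:ℝ) < r := hr0
    have hrm : (0:ℝ) < r ^ m := Real.rpow_pos_of_pos hr0' m
    have hrn : (0:ℝ) < r ^ n := pow_pos hr0' n
    have hFr : |∫ y, Γ y * ψ (r⁻¹ • (y - x))| = r ^ n * |G r| := by
      rw [hFB r hr0', abs_mul, abs_of_pos hrn]
    have hS : ∑ i, |∫ y in Eᶜ, g i y * φ i (r⁻¹ • (y - x))| ≤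
        ∑ i, C i * M i * (volume (ball x (r * ρ i) \ E)).toReal :=
      Finset.sum_le_sum fun i _ => hint i r hr0' (hrδ i)
    have hrnm : r ^ ((n:ℝ) - m) = r ^ n / r ^ m := by
      rw [Real.rpow_sub hr0', Real.rpow_natCast]
    have key : r ^ n * |G r| ≤ (r ^ n / r ^ m) *
        ∑ i, C i * M i * (volume (ball x (r * ρ i) \ E)).toReal := by
      rw [← hFr, ← hrnm]
      exact hb.trans (mul_le_mul_of_nonneg_left hS
        (Real.rpow_nonneg hr0'.le _))
    have key2 : r ^ n * |G r| ≤ r ^ n *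
        ((∑ i, C i * M i * (volume (ball x (r * ρ i) \ E)).toReal) / r ^ m) := by
      refine key.trans (le_of_eq ?_)
      ring
    have key3 : |G r| ≤
        (∑ i, C i * M i * (volume (ball x (r * ρ i) \ E)).toReal) / r ^ m :=
      le_of_mul_le_mul_left key2 hrn
    rw [Real.norm_eq_abs]
    refine key3.trans (le_of_eq ?_)
    rw [Finset.sum_div]
    exact Finset.sum_congr rfl fun i _ => by rw [mul_div_assoc]
  have hG0 : Tendsto G (𝓝[>] (0:ℝ)) (𝓝 0) := squeeze_zero_norm' hGle hsum
  have hzero : Γ x * ∫ z, ψ z = 0 := tendsto_nhds_unique hA hG0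
  rcases mul_eq_zero.mp hzero with h | h
  · exact h
  · exact absurd h hψi
end
end

section
/- If E, F ⊆ ℝⁿ are measurable and not equivalent (i.e., 𝓛ⁿ(E △ F) > 0), then the set {x ∈ ℝⁿ : d_E(x) ≠ d_F(x)} has positive Lebesgue measure. -/
open MeasureTheory Metric Filter Set Topology ENNReal

noncomputable section

lemma unitBall_ne_zero (n : ℕ) : volume (ball (0 : EuclideanSpace ℝ (Fin n)) 1) ≠ 0 :=
  (measure_ball_pos _ _ one_pos).ne'

lemma unitBall_ne_top (n : ℕ) : volume (ball (0 : EuclideanSpace ℝ (Fin n)) 1) ≠ ∞ :=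
  measure_ball_lt_top.ne

/-- Converting division by `r^n` into division by the measure of a closed ball. -/
lemma div_rpow_eq {n : ℕ} (x : EuclideanSpace ℝ (Fin n)) {r : ℝ} (hr : 0 < r) (a : ℝ≥0∞) :
    a / ENNReal.ofReal (r ^ (n : ℝ)) =
      a / volume (closedBall x r) * volume (ball (0 : EuclideanSpace ℝ (Fin n)) 1) := by
  rw [Measure.addHaar_closedBall _ x hr.le, finrank_euclideanSpace_fin, Real.rpow_natCast]
  have hb : ENNReal.ofReal (r ^ n) ≠ 0 := (ENNReal.ofReal_pos.2 (pow_pos hr n)).ne'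
  rw [div_eq_mul_inv, div_eq_mul_inv,
    ENNReal.mul_inv (Or.inl hb) (Or.inr (unitBall_ne_zero n)), mul_assoc, mul_assoc,
    ENNReal.inv_mul_cancel (unitBall_ne_zero n) (unitBall_ne_top n), mul_one]

/-- Almost every point of a measurable set `S` is an `n`-density point of `S`. -/
lemma ae_mem_dPts {n : ℕ} {S : Set (EuclideanSpace ℝ (Fin n))} (hS : MeasurableSet S) :
    ∀ᵐ x ∂(volume.restrict S), x ∈ dPts n S n := by
  filter_upwards [Besicovitch.ae_tendsto_measure_inter_div volume S] with x hx
  set c := volume (ball (0 : EuclideanSpace ℝ (Fin n)) 1) with hc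
  have hg : Tendsto
      (fun r : ℝ => volume (closedBall x r \ S) / volume (closedBall x r)) (𝓝[>] 0) (𝓝 0) := by
    have heq : ∀ᶠ r : ℝ in 𝓝[>] 0,
        volume (closedBall x r \ S) / volume (closedBall x r)
          = 1 - volume (S ∩ closedBall x r) / volume (closedBall x r) := by
      filter_upwards [self_mem_nhdsWithin] with r hr
      have h0 : volume (closedBall x r) ≠ 0 := (measure_closedBall_pos _ _ hr).ne'
      have ht : volume (closedBall x r) ≠ ∞ := measure_closedBall_lt_top.ne
      refine ENNReal.eq_sub_of_add_eq ?_ ?_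
      · exact (ENNReal.div_lt_top ((measure_mono inter_subset_right).trans_lt measure_closedBall_lt_top).ne h0).ne
      · rw [Set.inter_comm, ENNReal.div_add_div_same, measure_diff_add_inter _ hS,
          ENNReal.div_self h0 ht]
    have : Tendsto (fun r : ℝ => 1 - volume (S ∩ closedBall x r) / volume (closedBall x r))
        (𝓝[>] 0) (𝓝 (1 - 1)) :=
      ENNReal.Tendsto.sub tendsto_const_nhds hx (Or.inl one_ne_top)
    rw [tsub_self] at this
    exact this.congr' (heq.mono fun r h => h.symm)
  have hgc : Tendsto
      (fun r : ℝ => volume (closedBall x r \ S) / volume (closedBall x r) * c) (𝓝[>] 0)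
      (𝓝 0) := by
    have := ENNReal.Tendsto.mul_const hg (Or.inr (unitBall_ne_top n))
    rwa [zero_mul] at this
  refine tendsto_of_tendsto_of_tendsto_of_le_of_le' tendsto_const_nhds hgc
    (Eventually.of_forall fun r => zero_le) ?_
  filter_upwards [self_mem_nhdsWithin] with r hr
  calc volume (ball x r \ S) / ENNReal.ofReal (r ^ (n : ℝ))
      ≤ volume (closedBall x r \ S) / ENNReal.ofReal (r ^ (n : ℝ)) :=
        ENNReal.div_le_div_right
          (measure_mono (diff_subset_diff_left ball_subset_closedBall)) _
    _ = volume (closedBall x r \ S) / volume (closedBall x r) * c := div_rpow_eq x hr _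

/-- Almost no point of the complement of a measurable set `S` is an `n`-density point of `S`. -/
lemma ae_not_mem_dPts {n : ℕ} {S : Set (EuclideanSpace ℝ (Fin n))} (hS : MeasurableSet S) :
    ∀ᵐ x ∂(volume.restrict Sᶜ), x ∉ dPts n S n := by
  filter_upwards [Besicovitch.ae_tendsto_measure_inter_div volume Sᶜ] with x hx hmem
  set c := volume (ball (0 : EuclideanSpace ℝ (Fin n)) 1) with hc
  have heq : ∀ᶠ r : ℝ in 𝓝[>] 0,
      volume (ball x r \ S) / ENNReal.ofReal (r ^ (n : ℝ))
        = volume (Sᶜ ∩ closedBall x r) / volume (closedBall x r) * c := by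
    filter_upwards [self_mem_nhdsWithin] with r hr
    have hvol : volume (ball x r \ S) = volume (Sᶜ ∩ closedBall x r) := by
      refine le_antisymm (measure_mono fun y hy => ⟨hy.2, ball_subset_closedBall hy.1⟩) ?_
      have hsub : Sᶜ ∩ closedBall x r ⊆ (ball x r \ S) ∪ sphere x r := by
        intro y hy
        rcases lt_or_eq_of_le (mem_closedBall.1 hy.2) with h | h
        · exact Or.inl ⟨h, hy.1⟩
        · exact Or.inr h
      calc volume (Sᶜ ∩ closedBall x r) ≤ volume ((ball x r \ S) ∪ sphere x r) :=
            measure_mono hsub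
        _ ≤ volume (ball x r \ S) + volume (sphere x r) := measure_union_le _ _
        _ = volume (ball x r \ S) := by
            rw [Measure.addHaar_sphere_of_ne_zero _ _ hr.ne', add_zero]
    rw [hvol, div_rpow_eq x hr]
  have hlim : Tendsto (fun r : ℝ =>
      volume (Sᶜ ∩ closedBall x r) / volume (closedBall x r) * c) (𝓝[>] 0) (𝓝 (1 * c)) :=
    ENNReal.Tendsto.mul_const hx (Or.inl one_ne_zero)
  rw [one_mul] at hlim
  exact unitBall_ne_zero n (tendsto_nhds_unique hlim (hmem.congr' heq))

/-- Main auxiliary lemma: if `E \ F` has positive measure then the density degrees differ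
on a set of positive measure. -/
lemma ddeg_ne_of_diff {n : ℕ} {E F : Set (EuclideanSpace ℝ (Fin n))}
    (hE : MeasurableSet E) (hF : MeasurableSet F) (h : 0 < volume (E \ F)) :
    0 < volume {x | dDeg n E x ≠ dDeg n F x} := by
  set A := {x | dDeg n E x ≠ dDeg n F x} with hA
  have hae : ∀ᵐ x ∂(volume.restrict (E \ F)), x ∈ A := by
    have h1 : ∀ᵐ x ∂(volume.restrict (E \ F)), x ∈ dPts n E n :=
      ae_mono (Measure.restrict_mono diff_subset le_rfl) (ae_mem_dPts hE)
    have h2 : ∀ᵐ x ∂(volume.restrict (E \ F)), x ∉ dPts n F n :=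
      ae_mono (Measure.restrict_mono (fun x hx => hx.2) le_rfl) (ae_not_mem_dPts hF)
    filter_upwards [h1, h2] with x hx1 hx2
    have hFdeg : dDeg n F x = 0 := by unfold dDeg; rw [if_neg hx2]
    have hEdeg : dDeg n E x
        = sSup (ENNReal.ofReal '' {m : ℝ | (n : ℝ) ≤ m ∧ x ∈ dPts n E m}) := by
      unfold dDeg; rw [if_pos hx1]
    simp only [A, mem_setOf_eq, hFdeg, hEdeg]
    rcases Nat.eq_zero_or_pos n with rfl | hn
    · -- dimension zero: the space is a single point
      haveI : Subsingleton (EuclideanSpace ℝ (Fin 0)) :=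
        ⟨fun a b => PiLp.ext fun i => Fin.elim0 i⟩
      have hball : ∀ r : ℝ, 0 < r → ball x r = univ := by
        intro r hr
        refine eq_univ_of_forall fun y => ?_
        simp [mem_ball, Subsingleton.elim y x, dist_self, hr]
      have hEzero : volume ((univ : Set (EuclideanSpace ℝ (Fin 0))) \ E) = 0 := by
        have heq : ∀ᶠ r : ℝ in 𝓝[>] 0,
            volume (ball x r \ E) / ENNReal.ofReal (r ^ ((0 : ℕ) : ℝ))
              = volume ((univ : Set (EuclideanSpace ℝ (Fin 0))) \ E) := by
          filter_upwards [self_mem_nhdsWithin] with r hr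
          rw [hball r hr]
          norm_num
        exact tendsto_nhds_unique tendsto_const_nhds ((tendsto_congr' heq).1 hx1)
      have h1mem : x ∈ dPts 0 E 1 := by
        have heq : ∀ᶠ r : ℝ in 𝓝[>] 0,
            (0 : ℝ≥0∞) = volume (ball x r \ E) / ENNReal.ofReal (r ^ (1 : ℝ)) := by
          filter_upwards [self_mem_nhdsWithin] with r hr
          rw [hball r hr, hEzero, ENNReal.zero_div]
        exact tendsto_const_nhds.congr' heq
      intro hcon
      have hle : ENNReal.ofReal 1
          ≤ sSup (ENNReal.ofReal '' {m : ℝ | ((0 : ℕ) : ℝ) ≤ m ∧ x ∈ dPts 0 E m}) :=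
        le_sSup ⟨1, ⟨by norm_num, h1mem⟩, rfl⟩
      rw [hcon] at hle
      simp at hle
    · -- positive dimension
      intro hcon
      have hle : ENNReal.ofReal n
          ≤ sSup (ENNReal.ofReal '' {m : ℝ | (n : ℝ) ≤ m ∧ x ∈ dPts n E m}) :=
        le_sSup ⟨(n : ℝ), ⟨le_rfl, hx1⟩, rfl⟩
      rw [hcon] at hle
      have : (0 : ℝ) < n := Nat.cast_pos.2 hn
      rw [nonpos_iff_eq_zero, ENNReal.ofReal_eq_zero] at hle
      exact absurd hle (not_le.2 this)
  by_contra hcon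
  push_neg at hcon
  have hA0 : volume A = 0 := le_antisymm hcon zero_le
  have : volume (E \ F) ≤ volume.restrict (E \ F) A + volume.restrict (E \ F) Aᶜ := by
    calc volume (E \ F) = volume.restrict (E \ F) univ := by
          rw [Measure.restrict_apply_univ]
      _ = volume.restrict (E \ F) (A ∪ Aᶜ) := by rw [union_compl_self]
      _ ≤ _ := measure_union_le _ _
  have hr1 : volume.restrict (E \ F) A = 0 :=
    le_antisymm (le_trans (Measure.restrict_le_self _) hA0.le) zero_le
  have hr2 : volume.restrict (E \ F) Aᶜ = 0 := hae
  rw [hr1, hr2, add_zero] at this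
  exact absurd (le_antisymm this zero_le) h.ne'

theorem densityDeg_ne_of_not_ae_eq (n : ℕ) (E F : Set (EuclideanSpace ℝ (Fin n)))
    (hE : MeasurableSet E) (hF : MeasurableSet F)
    (h : 0 < volume ((E \ F) ∪ (F \ E))) :
    0 < volume {x | dDeg n E x ≠ dDeg n F x} := by
  rcases eq_or_ne (volume (E \ F)) 0 with h1 | h1
  · have h2 : 0 < volume (F \ E) := by
      rcases eq_or_ne (volume (F \ E)) 0 with h2 | h2
      · exact absurd (le_antisymm (le_trans (measure_union_le _ _) (by rw [h1, h2, add_zero]))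
          zero_le) h.ne'
      · exact pos_iff_ne_zero.2 h2
    have := ddeg_ne_of_diff hF hE h2
    have hset : {x | dDeg n F x ≠ dDeg n E x} = {x | dDeg n E x ≠ dDeg n F x} := by
      ext x; exact ne_comm
    rwa [hset] at this
  · exact ddeg_ne_of_diff hE hF (pos_iff_ne_zero.2 h1)
end
end

section
/- In ℝ, let E₁ = (−1, 0) and E₂ = (0, 1). Then d_{E₁∪E₂} = +∞·χ_{(−1,1)} while max(d_{E₁}, d_{E₂}) = +∞·χ_{(−1,1)\{0}}; in particular the identity d_{E₁∪E₂} = max(d_{E₁}, d_{E₂}) fails. -/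
open MeasureTheory Metric Filter Set Topology ENNReal

noncomputable section

/-- The set of `m`-density points of `E ⊆ ℝ`. -/
def dPts1 (E : Set ℝ) (m : ℝ) : Set ℝ :=
  {x | Tendsto (fun r : ℝ => volume (ball x r \ E) / ENNReal.ofReal (r ^ m))
      (𝓝[>] 0) (𝓝 0)}

open Classical in
/-- The density-degree function of `E ⊆ ℝ`. -/
def dDeg1 (E : Set ℝ) (x : ℝ) : ℝ≥0∞ :=
  if x ∈ dPts1 E 1 then
    sSup (ENNReal.ofReal '' {m : ℝ | 1 ≤ m ∧ x ∈ dPts1 E m})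
  else 0

lemma dDeg_top {E : Set ℝ} {x : ℝ}
    (h : ∀ᶠ r in 𝓝[>] (0:ℝ), volume (ball x r \ E) = 0) :
    dDeg1 E x = ⊤ := by
  have hmem : ∀ m : ℝ, x ∈ dPts1 E m := by
    intro m
    have he : (fun r : ℝ => volume (ball x r \ E) / ENNReal.ofReal (r ^ m))
        =ᶠ[𝓝[>] (0:ℝ)] fun _ => 0 := h.mono fun r hr => by simp [hr]
    exact Tendsto.congr' he.symm tendsto_const_nhds
  rw [dDeg1, if_pos (hmem 1), sSup_eq_top]
  intro b hb
  refine ⟨ENNReal.ofReal (max 1 (b.toReal + 1)),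
    ⟨max 1 (b.toReal + 1), ⟨le_max_left _ _, hmem _⟩, rfl⟩, ?_⟩
  calc b < b + 1 := ENNReal.lt_add_right hb.ne one_ne_zero
    _ = ENNReal.ofReal (b.toReal + 1) := by
        rw [ENNReal.ofReal_add ENNReal.toReal_nonneg zero_le_one,
          ENNReal.ofReal_toReal hb.ne, ENNReal.ofReal_one]
    _ ≤ _ := ENNReal.ofReal_le_ofReal (le_max_right _ _)

lemma dDeg_zero {E : Set ℝ} {x : ℝ}
    (h : ∀ᶠ r in 𝓝[>] (0:ℝ), ENNReal.ofReal r ≤ volume (ball x r \ E)) :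
    dDeg1 E x = 0 := by
  rw [dDeg1, if_neg]
  intro hx
  have h1 : ∀ᶠ r in 𝓝[>] (0:ℝ),
      (1:ℝ≥0∞) ≤ volume (ball x r \ E) / ENNReal.ofReal (r ^ (1:ℝ)) := by
    filter_upwards [h, self_mem_nhdsWithin] with r hr hr0
    have hr0' : (0:ℝ) < r := hr0
    rw [Real.rpow_one]
    calc (1:ℝ≥0∞) = ENNReal.ofReal r / ENNReal.ofReal r :=
          (ENNReal.div_self (by simp [hr0']) ENNReal.ofReal_ne_top).symm
      _ ≤ _ := ENNReal.div_le_div_right hr _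
  have h2 : ∀ᶠ r in 𝓝[>] (0:ℝ),
      volume (ball x r \ E) / ENNReal.ofReal (r ^ (1:ℝ)) < 1 :=
    hx (Iio_mem_nhds zero_lt_one)
  obtain ⟨r, hr1, hr2⟩ := (h1.and h2).exists
  exact absurd hr1 (not_le.mpr hr2)

lemma lb_right {E : Set ℝ} {x : ℝ} (hE : ∀ y ∈ E, y ≤ x) :
    ∀ᶠ r in 𝓝[>] (0:ℝ), ENNReal.ofReal r ≤ volume (ball x r \ E) := by
  filter_upwards [self_mem_nhdsWithin] with r hr
  have hsub : Ioo x (x + r) ⊆ ball x r \ E := by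
    intro y hy
    refine ⟨?_, fun hyE => absurd (hE y hyE) (not_le.mpr hy.1)⟩
    have hr' : (0:ℝ) < r := hr
    rw [Real.ball_eq_Ioo]
    exact ⟨by linarith [hy.1], hy.2⟩
  calc ENNReal.ofReal r = volume (Ioo x (x + r)) := by rw [Real.volume_Ioo]; ring_nf
    _ ≤ _ := measure_mono hsub

lemma lb_left {E : Set ℝ} {x : ℝ} (hE : ∀ y ∈ E, x ≤ y) :
    ∀ᶠ r in 𝓝[>] (0:ℝ), ENNReal.ofReal r ≤ volume (ball x r \ E) := by
  filter_upwards [self_mem_nhdsWithin] with r hr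
  have hsub : Ioo (x - r) x ⊆ ball x r \ E := by
    intro y hy
    refine ⟨?_, fun hyE => absurd (hE y hyE) (not_le.mpr hy.2)⟩
    have hr' : (0:ℝ) < r := hr
    rw [Real.ball_eq_Ioo]
    exact ⟨hy.1, by linarith [hy.2]⟩
  calc ENNReal.ofReal r = volume (Ioo (x - r) x) := by rw [Real.volume_Ioo]; ring_nf
    _ ≤ _ := measure_mono hsub

lemma mem_open_vol_zero {E : Set ℝ} {x : ℝ} (hE : IsOpen E) (hx : x ∈ E) :
    ∀ᶠ r in 𝓝[>] (0:ℝ), volume (ball x r \ E) = 0 := by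
  obtain ⟨ε, hε, hball⟩ := Metric.isOpen_iff.mp hE x hx
  filter_upwards [Ioo_mem_nhdsGT_of_mem (by simp [hε] : (0:ℝ) ∈ Ico 0 ε)] with r hr
  have : ball x r \ E = ∅ := by
    rw [diff_eq_empty]
    exact (ball_subset_ball hr.2.le).trans hball
  simp [this]

theorem densityDeg_union_counterexample :
    dDeg1 (Ioo (-1 : ℝ) 0 ∪ Ioo 0 1) = (Ioo (-1 : ℝ) 1).indicator (fun _ => (⊤ : ℝ≥0∞)) ∧
    (fun x => max (dDeg1 (Ioo (-1 : ℝ) 0) x) (dDeg1 (Ioo (0 : ℝ) 1) x)) =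
      (Ioo (-1 : ℝ) 1 \ {0}).indicator (fun _ => (⊤ : ℝ≥0∞)) ∧
    dDeg1 (Ioo (-1 : ℝ) 0 ∪ Ioo 0 1) ≠
      fun x => max (dDeg1 (Ioo (-1 : ℝ) 0) x) (dDeg1 (Ioo (0 : ℝ) 1) x) := by
  have hopen : IsOpen (Ioo (-1:ℝ) 0 ∪ Ioo 0 1) := (isOpen_Ioo).union isOpen_Ioo
  have h1 : dDeg1 (Ioo (-1 : ℝ) 0 ∪ Ioo 0 1)
      = (Ioo (-1 : ℝ) 1).indicator (fun _ => (⊤ : ℝ≥0∞)) := by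
    funext x
    by_cases hx : x ∈ Ioo (-1:ℝ) 1
    · rw [indicator_of_mem hx]
      by_cases hx0 : x = 0
      · subst hx0
        apply dDeg_top
        filter_upwards [Ioo_mem_nhdsGT_of_mem (by norm_num : (0:ℝ) ∈ Ico 0 1)] with r hr
        refine measure_mono_null (fun y hy => ?_) (measure_singleton (0:ℝ))
        · rcases hy with ⟨hyb, hyE⟩
          rw [Real.ball_eq_Ioo] at hyb
          simp only [mem_singleton_iff]
          by_contra hy0
          apply hyE
          rcases lt_or_gt_of_ne hy0 with h | h
          · exact Or.inl ⟨by linarith [hyb.1, hr.2], h⟩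
          · exact Or.inr ⟨h, by linarith [hyb.2, hr.2]⟩
      · apply dDeg_top
        apply mem_open_vol_zero hopen
        rcases lt_or_gt_of_ne hx0 with h | h
        · exact Or.inl ⟨hx.1, h⟩
        · exact Or.inr ⟨h, hx.2⟩
    · rw [indicator_of_notMem hx]
      rw [mem_Ioo, not_and_or, not_lt, not_lt] at hx
      apply dDeg_zero
      rcases hx with h | h
      · exact lb_left (fun y hy => by rcases hy with hy | hy <;> [linarith [hy.1]; linarith [hy.1]])
      · exact lb_right (fun y hy => by rcases hy with hy | hy <;> [linarith [hy.2]; linarith [hy.2]])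
  have h2 : (fun x => max (dDeg1 (Ioo (-1 : ℝ) 0) x) (dDeg1 (Ioo (0 : ℝ) 1) x)) =
      (Ioo (-1 : ℝ) 1 \ {0}).indicator (fun _ => (⊤ : ℝ≥0∞)) := by
    funext x
    by_cases hx : x ∈ Ioo (-1:ℝ) 1 \ {0}
    · rw [indicator_of_mem hx]
      obtain ⟨⟨hx1, hx2⟩, hx0⟩ := hx
      simp only [mem_singleton_iff] at hx0
      rcases lt_or_gt_of_ne hx0 with h | h
      · have := dDeg_top (mem_open_vol_zero isOpen_Ioo (⟨hx1, h⟩ : x ∈ Ioo (-1:ℝ) 0))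
        simp [this]
      · have := dDeg_top (mem_open_vol_zero isOpen_Ioo (⟨h, hx2⟩ : x ∈ Ioo (0:ℝ) 1))
        simp [this]
    · rw [indicator_of_notMem hx]
      rw [mem_diff, not_and_or, mem_Ioo, not_and_or, not_lt, not_lt, not_not,
        mem_singleton_iff] at hx
      have hz1 : dDeg1 (Ioo (-1:ℝ) 0) x = 0 := by
        apply dDeg_zero
        rcases hx with (h | h) | h
        · exact lb_left (fun y hy => by linarith [hy.1])
        · exact lb_right (fun y hy => by linarith [hy.2])
        · subst h; exact lb_right (fun y hy => hy.2.le)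
      have hz2 : dDeg1 (Ioo (0:ℝ) 1) x = 0 := by
        apply dDeg_zero
        rcases hx with (h | h) | h
        · exact lb_left (fun y hy => by linarith [hy.1])
        · exact lb_right (fun y hy => by linarith [hy.2])
        · subst h; exact lb_left (fun y hy => hy.1.le)
      simp [hz1, hz2]
  refine ⟨h1, h2, ?_⟩
  intro heq
  have h0 := congrFun (h1.symm.trans (heq.trans h2)) 0
  rw [indicator_of_mem (by norm_num : (0:ℝ) ∈ Ioo (-1:ℝ) 1),
    indicator_of_notMem (by simp : (0:ℝ) ∉ Ioo (-1:ℝ) 1 \ {0})] at h0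
  exact top_ne_zero h0
end
end

section
/- Let m ∈ (2, +∞) and E := {(x₁, x₂) ∈ ℝ² : |x₂| > |x₁|^{m−1}}. Then the limit lim_{r→0⁺} 𝓛²(B(0,r) \ E)/rᵐ exists and lies in (0, +∞); consequently d_E(0) = m but 0 is not an m-density point of E. -/
open MeasureTheory Metric Filter Set Topology ENNReal

noncomputable section

namespace CuspAux

variable (m : ℝ)

/-- The bounding region in `ℝ × ℝ`. -/
def T (c : ℝ) : Set (ℝ × ℝ) := {q : ℝ × ℝ | q.1 ∈ Ioo (-c) c ∧ |q.2| ≤ |q.1| ^ (m - 1)}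

lemma cont_h (hm : 2 < m) : Continuous (fun x : ℝ => |x| ^ (m - 1)) :=
  continuous_abs.rpow_const (fun _ => Or.inr (by linarith))

lemma measurable_T (hm : 2 < m) (c : ℝ) : MeasurableSet (T m c) := by
  have : T m c = (Prod.fst ⁻¹' Ioo (-c) c) ∩ {q : ℝ × ℝ | |q.2| ≤ |q.1| ^ (m - 1)} := rfl
  rw [this]
  exact (measurableSet_Ioo.preimage measurable_fst).inter
    (measurableSet_le (continuous_abs.comp continuous_snd).measurable
      ((cont_h m hm).comp continuous_fst).measurable)

lemma integral_T (hm : 2 < m) (c : ℝ) (hc : 0 ≤ c) :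
    ∫ x in Ioo (-c) c, 2 * |x| ^ (m - 1) = 4 / m * c ^ m := by
  have hm0 : (0:ℝ) < m := by linarith
  have hcont : Continuous (fun x : ℝ => 2 * |x| ^ (m - 1)) := continuous_const.mul (cont_h m hm)
  have e2 : ∫ x in (0:ℝ)..c, 2 * |x| ^ (m - 1) = 2 * (c ^ m / m) := by
    rw [intervalIntegral.integral_congr (g := fun x => 2 * x ^ (m - 1))
      (fun x hx => by rw [uIcc_of_le hc] at hx; rw [abs_of_nonneg hx.1]),
      intervalIntegral.integral_const_mul, integral_rpow (Or.inl (by linarith))]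
    have h1 : m - 1 + 1 = m := by ring
    rw [h1, Real.zero_rpow (ne_of_gt hm0)]
    ring
  have e1 : ∫ x in (-c)..(0:ℝ), 2 * |x| ^ (m - 1) = 2 * (c ^ m / m) := by
    have h := intervalIntegral.integral_comp_neg (a := (0:ℝ)) (b := c)
      (fun x => 2 * |x| ^ (m - 1))
    simp only [abs_neg, neg_zero] at h
    rw [← h, e2]
  have hi1 : IntervalIntegrable (fun x => 2 * |x| ^ (m - 1)) volume (-c) 0 :=
    hcont.intervalIntegrable _ _
  have hi2 : IntervalIntegrable (fun x => 2 * |x| ^ (m - 1)) volume 0 c :=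
    hcont.intervalIntegrable _ _
  rw [← integral_Ioc_eq_integral_Ioo, ← intervalIntegral.integral_of_le (by linarith : -c ≤ c),
    ← intervalIntegral.integral_add_adjacent_intervals hi1 hi2, e1, e2]
  field_simp
  ring

lemma volume_T (hm : 2 < m) (c : ℝ) (hc : 0 ≤ c) :
    volume (T m c) = ENNReal.ofReal (4 / m * c ^ m) := by
  have hm1 : (0:ℝ) ≤ m - 1 := by linarith
  rw [Measure.volume_eq_prod, Measure.prod_apply (measurable_T m hm c)]
  have hslice : ∀ x : ℝ, volume (Prod.mk x ⁻¹' T m c)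
      = (Ioo (-c) c).indicator (fun x => ENNReal.ofReal (2 * |x| ^ (m - 1))) x := by
    intro x
    by_cases hx : x ∈ Ioo (-c) c
    · have : Prod.mk x ⁻¹' T m c = Icc (-(|x| ^ (m - 1))) (|x| ^ (m - 1)) := by
        ext y
        simp only [T, mem_setOf_eq, mem_preimage, mem_Icc, abs_le]
        exact ⟨fun h => h.2, fun h => ⟨hx, h⟩⟩
      rw [this, Real.volume_Icc, indicator_of_mem hx]
      congr 1; ring
    · have : Prod.mk x ⁻¹' T m c = ∅ := by
        ext y
        simp only [T, mem_setOf_eq, mem_preimage, mem_empty_iff_false, iff_false, not_and, mem_Ioo, not_le]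
        exact fun h1 => (hx (mem_Ioo.mpr h1)).elim
      rw [this, indicator_of_notMem hx]; simp
  simp_rw [hslice]
  rw [lintegral_indicator measurableSet_Ioo _,
    ← ofReal_integral_eq_lintegral_ofReal
      (f := fun x => 2 * |x| ^ (m - 1)) ((continuous_const.mul (cont_h m hm)).integrableOn_Icc.mono_set Ioo_subset_Icc_self)
      (Filter.Eventually.of_forall (fun x => by positivity)),
    integral_T m hm c hc]


/-- The cusp-complement set. -/
def Ecusp : Set (EuclideanSpace ℝ (Fin 2)) := {p | |p 1| > |p 0| ^ (m - 1)}

/-- The target region in `ℝ × ℝ` corresponding to `ball 0 r \ Ecusp`. -/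
def Fr (r : ℝ) : Set (ℝ × ℝ) :=
  {q : ℝ × ℝ | Real.sqrt (q.1 ^ 2 + q.2 ^ 2) < r ∧ ¬ |q.2| > |q.1| ^ (m - 1)}

def Φ : EuclideanSpace ℝ (Fin 2) ≃ᵐ ℝ × ℝ :=
  (MeasurableEquiv.toLp 2 (Fin 2 → ℝ)).symm.trans MeasurableEquiv.finTwoArrow

lemma measurePreserving_Φ : MeasurePreserving (Φ) volume volume :=
  (volume_preserving_finTwoArrow ℝ).comp (EuclideanSpace.volume_preserving_symm_measurableEquiv_toLp (Fin 2))

lemma Φ_apply (p : EuclideanSpace ℝ (Fin 2)) : Φ p = (p 0, p 1) := rfl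

lemma ball_diff_eq (r : ℝ) :
    ball (0 : EuclideanSpace ℝ (Fin 2)) r \ Ecusp m = Φ ⁻¹' Fr m r := by
  ext p
  simp only [mem_diff, mem_ball, mem_preimage, Φ_apply, Fr, Ecusp, mem_setOf_eq]
  rw [EuclideanSpace.dist_eq]
  simp [Fin.sum_univ_two, Real.dist_eq, sq_abs]

lemma measurable_Fr (hm : 2 < m) (r : ℝ) : MeasurableSet (Fr m r) := by
  have h1 : MeasurableSet {q : ℝ × ℝ | Real.sqrt (q.1 ^ 2 + q.2 ^ 2) < r} :=
    measurableSet_lt (((continuous_fst.pow 2).add (continuous_snd.pow 2)).sqrt).measurable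
      measurable_const
  have h2 : MeasurableSet {q : ℝ × ℝ | ¬ |q.2| > |q.1| ^ (m - 1)} := by
    have : {q : ℝ × ℝ | ¬ |q.2| > |q.1| ^ (m - 1)} = {q : ℝ × ℝ | |q.2| ≤ |q.1| ^ (m - 1)} := by
      ext q; simp [not_lt]
    rw [this]
    exact measurableSet_le (continuous_abs.comp continuous_snd).measurable
      ((cont_h m hm).comp continuous_fst).measurable
  exact h1.inter h2

lemma volume_ball_diff (hm : 2 < m) (r : ℝ) :
    volume (ball (0 : EuclideanSpace ℝ (Fin 2)) r \ Ecusp m) = volume (Fr m r) := by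
  rw [ball_diff_eq]
  exact (measurePreserving_Φ).measure_preimage (measurable_Fr m hm r).nullMeasurableSet

lemma Fr_subset_T (hm : 2 < m) (r : ℝ) : Fr m r ⊆ T m r := by
  rintro q ⟨h1, h2⟩
  refine ⟨abs_lt.mp ?_, not_lt.mp h2⟩
  calc |q.1| = Real.sqrt (q.1 ^ 2) := (Real.sqrt_sq_eq_abs q.1).symm
    _ ≤ Real.sqrt (q.1 ^ 2 + q.2 ^ 2) := Real.sqrt_le_sqrt (by nlinarith [sq_nonneg q.2])
    _ < r := h1

lemma T_subset_Fr (hm : 2 < m) {a r : ℝ} (ha : a ∈ Ioo (0:ℝ) 1) (hr : 0 < r)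
    (hcond : (a * r) ^ 2 + ((a * r) ^ (m - 1)) ^ 2 ≤ r ^ 2) :
    T m (a * r) ⊆ Fr m r := by
  have hm1 : (0:ℝ) ≤ m - 1 := by linarith
  have har : 0 ≤ a * r := mul_nonneg ha.1.le hr.le
  rintro q ⟨h1, h2⟩
  have hq1 : |q.1| < a * r := abs_lt.mpr (mem_Ioo.mp h1)
  have hq2 : |q.2| ≤ (a * r) ^ (m - 1) :=
    h2.trans (Real.rpow_le_rpow (abs_nonneg _) hq1.le hm1)
  constructor
  · rw [Real.sqrt_lt' hr]
    have e1 : q.1 ^ 2 < (a * r) ^ 2 := by nlinarith [abs_nonneg q.1, sq_abs q.1]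
    have e2 : q.2 ^ 2 ≤ ((a * r) ^ (m - 1)) ^ 2 := by nlinarith [abs_nonneg q.2, sq_abs q.2]
    linarith
  · exact not_lt.mpr h2

lemma eventually_cond (hm : 2 < m) {a : ℝ} (ha : a ∈ Ioo (0:ℝ) 1) :
    ∀ᶠ r in 𝓝[>] (0:ℝ), (a * r) ^ 2 + ((a * r) ^ (m - 1)) ^ 2 ≤ r ^ 2 := by
  have hexp : (0:ℝ) < 2 * m - 4 := by linarith
  have h0 : Tendsto (fun r : ℝ => r ^ (2 * m - 4)) (𝓝[>] 0) (𝓝 0) := by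
    have h := (Real.continuousAt_rpow_const 0 (2 * m - 4) (Or.inr hexp.le)).tendsto
    rw [Real.zero_rpow (ne_of_gt hexp)] at h
    exact h.mono_left nhdsWithin_le_nhds
  have key : Tendsto (fun r : ℝ => a ^ 2 + (a ^ (m - 1)) ^ 2 * r ^ (2 * m - 4)) (𝓝[>] 0)
      (𝓝 (a ^ 2)) := by
    have h := (h0.const_mul ((a ^ (m - 1)) ^ 2)).const_add (a ^ 2)
    simpa using h
  have ha2 : a ^ 2 < 1 := by nlinarith [ha.1, ha.2]
  filter_upwards [key.eventually_lt_const ha2, self_mem_nhdsWithin] with r hlt hr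
  have hr : (0:ℝ) < r := hr
  have h1 : (a * r) ^ (m - 1) = a ^ (m - 1) * r ^ (m - 1) := Real.mul_rpow ha.1.le hr.le
  have h2 : (r ^ (m - 1)) ^ 2 = r ^ (2 * m - 4) * r ^ 2 := by
    have e : m - 1 + (m - 1) = 2 * m - 4 + ((2:ℕ):ℝ) := by push_cast; ring
    rw [sq, ← Real.rpow_add hr, e, Real.rpow_add hr, Real.rpow_natCast]
  rw [h1, mul_pow, mul_pow, h2]
  nlinarith [mul_le_mul_of_nonneg_right hlt.le (sq_nonneg r)]

lemma volume_diff_le (hm : 2 < m) {r : ℝ} (hr : 0 < r) :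
    volume (ball (0 : EuclideanSpace ℝ (Fin 2)) r \ Ecusp m)
      ≤ ENNReal.ofReal (4 / m * r ^ m) := by
  rw [volume_ball_diff m hm, ← volume_T m hm r hr.le]
  exact measure_mono (Fr_subset_T m hm r)

lemma le_volume_diff (hm : 2 < m) {a : ℝ} (ha : a ∈ Ioo (0:ℝ) 1) :
    ∀ᶠ r in 𝓝[>] (0:ℝ),
      ENNReal.ofReal (4 / m * (a * r) ^ m) ≤
        volume (ball (0 : EuclideanSpace ℝ (Fin 2)) r \ Ecusp m) := by
  filter_upwards [eventually_cond m hm ha, self_mem_nhdsWithin] with r hcond hr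
  rw [volume_ball_diff m hm, ← volume_T m hm (a * r) (mul_nonneg ha.1.le (le_of_lt hr))]
  exact measure_mono (T_subset_Fr m hm ha hr hcond)

lemma volume_diff_ne_top (r : ℝ) :
    volume (ball (0 : EuclideanSpace ℝ (Fin 2)) r \ Ecusp m) ≠ ⊤ :=
  ((measure_mono diff_subset).trans_lt measure_ball_lt_top).ne

lemma main_tendsto (hm : 2 < m) :
    Tendsto (fun r : ℝ =>
      (volume (ball (0 : EuclideanSpace ℝ (Fin 2)) r \ Ecusp m)).toReal / r ^ m)
      (𝓝[>] 0) (𝓝 (4 / m)) := by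
  have hm0 : (0:ℝ) < m := by linarith
  rw [tendsto_order]
  constructor
  · intro b hb
    have h1 : (1:ℝ) ∈ closure (Ioo (0:ℝ) 1) := by
      rw [closure_Ioo one_ne_zero.symm]
      exact ⟨by norm_num, le_refl 1⟩
    have hcont : ContinuousAt (fun a : ℝ => 4 / m * a ^ m) 1 :=
      (Real.continuousAt_rpow_const 1 m (Or.inl one_ne_zero)).const_mul _
    have ht : Tendsto (fun a : ℝ => 4 / m * a ^ m) (𝓝 1) (𝓝 (4 / m)) := by
      have h := hcont.tendsto
      simpa [Real.one_rpow] using h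
    obtain ⟨a, hafx, haI⟩ := mem_closure_iff_nhds.mp h1 _ (ht.eventually_const_lt hb)
    filter_upwards [le_volume_diff m hm haI, self_mem_nhdsWithin] with r hlow hr
    have hr : (0:ℝ) < r := hr
    have hreal : 4 / m * (a * r) ^ m ≤
        (volume (ball (0 : EuclideanSpace ℝ (Fin 2)) r \ Ecusp m)).toReal :=
      (ENNReal.ofReal_le_iff_le_toReal (volume_diff_ne_top m r)).mp hlow
    have hrm : (0:ℝ) < r ^ m := Real.rpow_pos_of_pos hr m
    rw [lt_div_iff₀ hrm]
    have e : (a * r) ^ m = a ^ m * r ^ m := Real.mul_rpow haI.1.le hr.le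
    calc b * r ^ m < 4 / m * a ^ m * r ^ m :=
          mul_lt_mul_of_pos_right hafx hrm
      _ = 4 / m * (a * r) ^ m := by rw [e]; ring
      _ ≤ _ := hreal
  · intro b hb
    filter_upwards [self_mem_nhdsWithin] with r hr
    have hr : (0:ℝ) < r := hr
    have hup : (volume (ball (0 : EuclideanSpace ℝ (Fin 2)) r \ Ecusp m)).toReal
        ≤ 4 / m * r ^ m :=
      ENNReal.toReal_le_of_le_ofReal
        (mul_nonneg (div_nonneg (by norm_num) hm0.le) (Real.rpow_nonneg hr.le m))
        (volume_diff_le m hm hr)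
    have hrm : (0:ℝ) < r ^ m := Real.rpow_pos_of_pos hr m
    rw [div_lt_iff₀ hrm]
    calc (volume (ball (0 : EuclideanSpace ℝ (Fin 2)) r \ Ecusp m)).toReal
        ≤ 4 / m * r ^ m := hup
      _ < b * r ^ m := by nlinarith

lemma ofReal_identity (p r : ℝ) (hr : 0 < r) :
    volume (ball (0 : EuclideanSpace ℝ (Fin 2)) r \ Ecusp m) / ENNReal.ofReal (r ^ p)
      = ENNReal.ofReal
          ((volume (ball (0 : EuclideanSpace ℝ (Fin 2)) r \ Ecusp m)).toReal / r ^ p) := by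
  rw [ENNReal.ofReal_div_of_pos (Real.rpow_pos_of_pos hr p),
    ENNReal.ofReal_toReal (volume_diff_ne_top m r)]

lemma mem_dPts (hm : 2 < m) {p : ℝ} (hp : p < m) :
    Tendsto (fun r : ℝ =>
        volume (ball (0 : EuclideanSpace ℝ (Fin 2)) r \ Ecusp m) / ENNReal.ofReal (r ^ p))
      (𝓝[>] 0) (𝓝 0) := by
  have hm0 : (0:ℝ) < m := by linarith
  have hg : Tendsto (fun r : ℝ => 4 / m * r ^ (m - p)) (𝓝[>] 0) (𝓝 0) := by
    have h := (Real.continuousAt_rpow_const 0 (m - p) (Or.inr (by linarith))).tendsto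
    rw [Real.zero_rpow (by linarith : m - p ≠ 0)] at h
    have h2 := Filter.Tendsto.const_mul (4 / m)
      (h.mono_left (nhdsWithin_le_nhds (s := Ioi (0:ℝ))))
    simpa using h2
  have hsq : Tendsto (fun r : ℝ =>
      (volume (ball (0 : EuclideanSpace ℝ (Fin 2)) r \ Ecusp m)).toReal / r ^ p)
      (𝓝[>] 0) (𝓝 0) := by
    apply squeeze_zero' ?_ ?_ hg
    · filter_upwards [self_mem_nhdsWithin] with r hr
      exact div_nonneg ENNReal.toReal_nonneg (Real.rpow_nonneg (le_of_lt hr) p)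
    · filter_upwards [self_mem_nhdsWithin] with r hr
      have hr : (0:ℝ) < r := hr
      have hup : (volume (ball (0 : EuclideanSpace ℝ (Fin 2)) r \ Ecusp m)).toReal
          ≤ 4 / m * r ^ m :=
        ENNReal.toReal_le_of_le_ofReal
          (mul_nonneg (div_nonneg (by norm_num) hm0.le) (Real.rpow_nonneg hr.le m))
          (volume_diff_le m hm hr)
      rw [div_le_iff₀ (Real.rpow_pos_of_pos hr p)]
      calc (volume (ball (0 : EuclideanSpace ℝ (Fin 2)) r \ Ecusp m)).toReal
          ≤ 4 / m * r ^ m := hup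
        _ = 4 / m * r ^ (m - p) * r ^ p := by
            rw [mul_assoc, ← Real.rpow_add hr]; ring_nf
  have h := ENNReal.tendsto_ofReal (a := 0) hsq
  rw [ENNReal.ofReal_zero] at h
  refine Filter.Tendsto.congr' ?_ h
  filter_upwards [self_mem_nhdsWithin] with r hr
  exact (ofReal_identity m p r hr).symm

lemma not_mem_dPts (hm : 2 < m) {p : ℝ} (hp : m ≤ p) :
    ¬ Tendsto (fun r : ℝ =>
        volume (ball (0 : EuclideanSpace ℝ (Fin 2)) r \ Ecusp m) / ENNReal.ofReal (r ^ p))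
      (𝓝[>] 0) (𝓝 0) := by
  intro hcon
  have hreal : Tendsto (fun r : ℝ =>
      (volume (ball (0 : EuclideanSpace ℝ (Fin 2)) r \ Ecusp m)).toReal / r ^ p)
      (𝓝[>] 0) (𝓝 0) := by
    have h2 := (ENNReal.tendsto_toReal (by simp : (0:ℝ≥0∞) ≠ ⊤)).comp hcon
    rw [ENNReal.toReal_zero] at h2
    refine Filter.Tendsto.congr' ?_ h2
    filter_upwards [self_mem_nhdsWithin] with r hr
    have hr : (0:ℝ) < r := hr
    simp only [Function.comp_apply, ofReal_identity m p r hr,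
      ENNReal.toReal_ofReal (div_nonneg ENNReal.toReal_nonneg (Real.rpow_nonneg hr.le p))]
  have hg0 : Tendsto (fun r : ℝ =>
      (volume (ball (0 : EuclideanSpace ℝ (Fin 2)) r \ Ecusp m)).toReal / r ^ m)
      (𝓝[>] 0) (𝓝 0) := by
    apply squeeze_zero' ?_ ?_ hreal
    · filter_upwards [self_mem_nhdsWithin] with r hr
      exact div_nonneg ENNReal.toReal_nonneg (Real.rpow_nonneg (le_of_lt hr) m)
    · filter_upwards [Ioc_mem_nhdsGT_of_mem (by norm_num : (0:ℝ) ∈ Ico (0:ℝ) 1)] with r hr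
      exact div_le_div_of_nonneg_left ENNReal.toReal_nonneg
        (Real.rpow_pos_of_pos hr.1 p)
        (Real.rpow_le_rpow_of_exponent_ge hr.1 hr.2 hp)
  have huniq := tendsto_nhds_unique hg0 (main_tendsto m hm)
  have hpos : (0:ℝ) < 4 / m := div_pos (by norm_num) (by linarith)
  linarith [huniq ▸ hpos]

end CuspAux

theorem densityDeg_cusp_example (m : ℝ) (hm : 2 < m) :
    ∃ L : ℝ≥0∞,
      Tendsto
        (fun r : ℝ =>
          volume ((ball (0 : EuclideanSpace ℝ (Fin 2)) r) \
            {p : EuclideanSpace ℝ (Fin 2) | |p 1| > |p 0| ^ (m - 1)}) /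
          ENNReal.ofReal (r ^ m))
        (𝓝[>] 0) (𝓝 L) ∧ 0 < L ∧ L < ⊤ ∧
      dDeg 2 {p : EuclideanSpace ℝ (Fin 2) | |p 1| > |p 0| ^ (m - 1)} 0 = ENNReal.ofReal m ∧
      (0 : EuclideanSpace ℝ (Fin 2)) ∉
        dPts 2 {p : EuclideanSpace ℝ (Fin 2) | |p 1| > |p 0| ^ (m - 1)} m := by
  have hm0 : (0:ℝ) < m := by linarith
  have hmem : ∀ p : ℝ, p < m →
      (0 : EuclideanSpace ℝ (Fin 2)) ∈
        dPts 2 {p : EuclideanSpace ℝ (Fin 2) | |p 1| > |p 0| ^ (m - 1)} p :=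
    fun p hp => CuspAux.mem_dPts m hm hp
  have hnot : ∀ p : ℝ, m ≤ p →
      (0 : EuclideanSpace ℝ (Fin 2)) ∉
        dPts 2 {p : EuclideanSpace ℝ (Fin 2) | |p 1| > |p 0| ^ (m - 1)} p :=
    fun p hp => CuspAux.not_mem_dPts m hm hp
  refine ⟨ENNReal.ofReal (4 / m), ?_, ?_, ?_, ?_, hnot m le_rfl⟩
  · have h := ENNReal.tendsto_ofReal (CuspAux.main_tendsto m hm)
    refine Filter.Tendsto.congr' ?_ h
    filter_upwards [self_mem_nhdsWithin] with r hr
    exact (CuspAux.ofReal_identity m m r hr).symm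
  · exact ENNReal.ofReal_pos.mpr (div_pos (by norm_num) hm0)
  · exact ENNReal.ofReal_lt_top
  · have h2cast : ((2:ℕ):ℝ) < m := by exact_mod_cast hm
    have h2 : (0 : EuclideanSpace ℝ (Fin 2)) ∈
        dPts 2 {p : EuclideanSpace ℝ (Fin 2) | |p 1| > |p 0| ^ (m - 1)} ((2:ℕ):ℝ) :=
      hmem _ h2cast
    simp only [dDeg]
    rw [if_pos h2]
    apply le_antisymm
    · apply sSup_le
      rintro x ⟨p, ⟨hp2, hpd⟩, rfl⟩
      apply ENNReal.ofReal_le_ofReal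
      by_contra hcon
      push_neg at hcon
      exact hnot p hcon.le hpd
    · refine le_of_forall_lt fun c hc => ?_
      have hct : c ≠ ⊤ := ne_top_of_lt hc
      have hctr : c.toReal < m := by
        have h := ENNReal.toReal_strict_mono ENNReal.ofReal_ne_top hc
        rwa [ENNReal.toReal_ofReal hm0.le] at h
      set t := max 2 ((c.toReal + m) / 2) with ht
      have htm : t < m := max_lt hm (by linarith)
      have ht2 : (2:ℝ) ≤ t := le_max_left _ _
      have hctt : c.toReal < t := lt_of_lt_of_le (by linarith) (le_max_right _ _)
      have htS : ENNReal.ofReal t ∈ ENNReal.ofReal '' {m' : ℝ | ((2:ℕ):ℝ) ≤ m' ∧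
          (0 : EuclideanSpace ℝ (Fin 2)) ∈
            dPts 2 {p : EuclideanSpace ℝ (Fin 2) | |p 1| > |p 0| ^ (m - 1)} m'} :=
        ⟨t, ⟨by push_cast; exact ht2, hmem t htm⟩, rfl⟩
      have hclt : c < ENNReal.ofReal t := by
        rw [← ENNReal.ofReal_toReal hct]
        exact (ENNReal.ofReal_lt_ofReal_iff (by linarith)).mpr hctt
      exact hclt.trans_le (le_sSup htS)
end
end

section
/- Let F ⊆ ℝⁿ be measurable with 0 < ‖d_F‖_∞ < +∞ and let m ∈ (‖d_F‖_∞, +∞). Then there is no measurable set E ⊆ ℝⁿ with d_E = m·χ_F almost everywhere. -/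
open MeasureTheory Metric Filter Set Topology ENNReal

noncomputable section

namespace NoPrescribedAux

variable {n : ℕ} {E F : Set (EuclideanSpace ℝ (Fin n))}

lemma vol_ball_diff (x : EuclideanSpace ℝ (Fin n)) {r : ℝ} (hr : 0 < r) :
    volume (ball x r \ E) = volume (closedBall x r \ E) := by
  refine le_antisymm (measure_mono (diff_subset_diff_left ball_subset_closedBall)) ?_
  have h1 : closedBall x r \ E ⊆ (ball x r \ E) ∪ sphere x r := by
    intro y hy
    rcases lt_or_eq_of_le (mem_closedBall.1 hy.1) with h | h
    · exact Or.inl ⟨h, hy.2⟩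
    · exact Or.inr h
  calc volume (closedBall x r \ E) ≤ volume (ball x r \ E) + volume (sphere x r) :=
        le_trans (measure_mono h1) (measure_union_le _ _)
    _ = volume (ball x r \ E) := by
        rw [Measure.addHaar_sphere_of_ne_zero volume x hr.ne', add_zero]

lemma mem_dPts_iff (x : EuclideanSpace ℝ (Fin n)) :
    x ∈ dPts n E n ↔
      Tendsto (fun r => volume (Eᶜ ∩ closedBall x r) / volume (closedBall x r))
        (𝓝[>] (0:ℝ)) (𝓝 0) := by
  set c := volume (ball (0 : EuclideanSpace ℝ (Fin n)) 1) with hc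
  have hc0 : c ≠ 0 := (measure_ball_pos volume _ one_pos).ne'
  have hctop : c ≠ ⊤ := measure_ball_lt_top.ne
  have hev : (fun r => volume (Eᶜ ∩ closedBall x r) / volume (closedBall x r))
      =ᶠ[𝓝[>] (0:ℝ)]
      fun r => (volume (ball x r \ E) / ENNReal.ofReal (r ^ (n:ℝ))) * c⁻¹ := by
    filter_upwards [self_mem_nhdsWithin] with r (hr : 0 < r)
    have h1 : Eᶜ ∩ closedBall x r = closedBall x r \ E := by rw [inter_comm, diff_eq]
    rw [h1, ← vol_ball_diff x hr, Measure.addHaar_closedBall volume x hr.le,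
      finrank_euclideanSpace_fin, ← Real.rpow_natCast r n,
      div_eq_mul_inv _ (_ * c), ENNReal.mul_inv (Or.inr hctop) (Or.inl ENNReal.ofReal_ne_top),
      ← mul_assoc]
    simp [div_eq_mul_inv, mul_assoc]
  have hmem : x ∈ dPts n E n ↔
      Tendsto (fun r : ℝ => volume (ball x r \ E) / ENNReal.ofReal (r ^ (n:ℝ)))
        (𝓝[>] (0:ℝ)) (𝓝 0) := Iff.rfl
  rw [hmem]
  constructor
  · intro h
    have h2 := ENNReal.Tendsto.mul_const (b := c⁻¹) h
      (Or.inr (by simp [hc0]))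
    rw [zero_mul] at h2
    exact h2.congr' hev.symm
  · intro h
    have h2 := h.congr' hev
    have h3 := ENNReal.Tendsto.mul_const (b := c) h2 (Or.inr hctop)
    rw [zero_mul] at h3
    refine h3.congr fun r => ?_
    rw [mul_assoc, ENNReal.inv_mul_cancel hc0 hctop, mul_one]

lemma ae_mem_dPts_iff (hE : MeasurableSet E) :
    ∀ᵐ x ∂(volume : Measure (EuclideanSpace ℝ (Fin n))), (x ∈ dPts n E n ↔ x ∈ E) := by
  filter_upwards [Besicovitch.ae_tendsto_measure_inter_div_of_measurableSet volume hE.compl]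
    with x hx
  constructor
  · intro hxd
    by_contra hxE
    rw [Set.indicator_of_mem (show x ∈ Eᶜ from hxE), Pi.one_apply] at hx
    exact zero_ne_one (tendsto_nhds_unique ((mem_dPts_iff x).1 hxd) hx)
  · intro hxE
    refine (mem_dPts_iff x).2 ?_
    rwa [Set.indicator_of_notMem (show x ∉ Eᶜ by simp [hxE])] at hx

lemma dDeg_ne_zero {x : EuclideanSpace ℝ (Fin n)} (h : x ∈ dPts n E n) :
    dDeg n E x ≠ 0 := by
  have key : ∃ k : ℝ, 1 ≤ k ∧ (n:ℝ) ≤ k ∧ x ∈ dPts n E k := by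
    rcases Nat.eq_zero_or_pos n with hn | hn
    · subst hn
      have huniv : ∀ r : ℝ, 0 < r → ball x r = univ := by
        intro r hr
        refine eq_univ_of_forall fun y => ?_
        simpa [Subsingleton.elim y x] using hr
      have h0 : volume ((univ : Set (EuclideanSpace ℝ (Fin 0))) \ E) = 0 := by
        have hev : (fun r : ℝ => volume (ball x r \ E) / ENNReal.ofReal (r ^ ((0:ℕ):ℝ)))
            =ᶠ[𝓝[>] (0:ℝ)] fun _ => volume (univ \ E) := by
          filter_upwards [self_mem_nhdsWithin] with r (hr : 0 < r)
          simp [huniv r hr]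
        have ht : Tendsto (fun _ : ℝ => volume ((univ : Set (EuclideanSpace ℝ (Fin 0))) \ E))
            (𝓝[>] (0:ℝ)) (𝓝 0) := (Tendsto.congr' hev h)
        exact (tendsto_nhds_unique ht tendsto_const_nhds).symm
      have h1 : x ∈ dPts 0 E 1 := by
        have hz : ∀ r : ℝ, volume (ball x r \ E) = 0 := fun r =>
          measure_mono_null (diff_subset_diff_left (subset_univ _)) h0
        have : (fun r : ℝ => volume (ball x r \ E) / ENNReal.ofReal (r ^ (1:ℝ)))
            = fun _ => 0 := by
          funext r; rw [hz r, ENNReal.zero_div]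
        show Tendsto _ _ _
        rw [this]
        exact tendsto_const_nhds
      exact ⟨1, le_refl 1, by norm_num, h1⟩
    · exact ⟨n, by exact_mod_cast hn, le_refl _, h⟩
  obtain ⟨k, hk1, hkn, hk⟩ := key
  have hle : ENNReal.ofReal k ≤ dDeg n E x := by
    rw [dDeg, if_pos h]
    exact le_sSup ⟨k, ⟨hkn, hk⟩, rfl⟩
  intro h0
  rw [h0, nonpos_iff_eq_zero, ENNReal.ofReal_eq_zero] at hle
  linarith

lemma dDeg_congr (hEF : E =ᵐ[volume] F) : dDeg n E = dDeg n F := by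
  have hpts : dPts n E = dPts n F := by
    funext m
    ext x
    have hvol : ∀ r : ℝ, volume (ball x r \ E) = volume (ball x r \ F) := fun r =>
      measure_congr (EventuallyEq.rfl.diff hEF)
    simp only [dPts, mem_setOf_eq, hvol]
  unfold dDeg
  rw [hpts]

end NoPrescribedAux

open NoPrescribedAux in
theorem no_set_with_prescribed_densityDeg (n : ℕ) (F : Set (EuclideanSpace ℝ (Fin n)))
    (hF : MeasurableSet F)
    (h0 : 0 < essSup (dDeg n F) volume) (hfin : essSup (dDeg n F) volume < ⊤)
    (m : ℝ) (hm : essSup (dDeg n F) volume < ENNReal.ofReal m) :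
    ¬ ∃ E : Set (EuclideanSpace ℝ (Fin n)), MeasurableSet E ∧
      ∀ᵐ x ∂volume, dDeg n E x = F.indicator (fun _ => ENNReal.ofReal m) x := by
  rintro ⟨E, hE, hae⟩
  have hm0 : 0 < m := ENNReal.ofReal_pos.1 (h0.trans hm)
  have hdens := ae_mem_dPts_iff hE
  have hEF : E =ᵐ[volume] F := by
    rw [Filter.eventuallyEq_set]
    filter_upwards [hae, hdens] with x h1 h2
    constructor
    · intro hxE
      by_contra hxF
      have hne := dDeg_ne_zero (h2.2 hxE)
      rw [h1, Set.indicator_of_notMem hxF] at hne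
      exact hne rfl
    · intro hxF
      refine h2.1 ?_
      by_contra hxd
      have hz : dDeg n E x = 0 := by rw [dDeg, if_neg hxd]
      rw [h1, Set.indicator_of_mem hxF] at hz
      exact (ENNReal.ofReal_pos.2 hm0).ne' hz
  have hdd : dDeg n E = dDeg n F := dDeg_congr hEF
  have key : essSup (dDeg n F) volume
      = essSup (F.indicator fun _ => ENNReal.ofReal m) volume := by
    rw [← hdd]; exact essSup_congr_ae hae
  have hFnull : volume F = 0 := by
    rw [measure_eq_zero_iff_ae_notMem]
    filter_upwards [ENNReal.ae_le_essSup (F.indicator fun _ => ENNReal.ofReal m)] with x hx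
    intro hxF
    rw [Set.indicator_of_mem hxF, ← key] at hx
    exact absurd hm (not_lt.2 hx)
  have hzero : essSup (dDeg n F) volume = 0 := by
    rw [key]
    have hind : (F.indicator fun _ => ENNReal.ofReal m) =ᵐ[volume] (fun _ => (0:ℝ≥0∞)) := by
      filter_upwards [measure_eq_zero_iff_ae_notMem.1 hFnull] with x hx
      exact Set.indicator_of_notMem hx _
    rw [essSup_congr_ae hind]
    simpa using essSup_const_bot (μ := (volume : Measure (EuclideanSpace ℝ (Fin n))))
      (β := ℝ≥0∞)
  rw [hzero] at h0
  exact lt_irrefl _ h0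
end
end
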